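/- arXiv:math/0505097 — 2 statements merged into one kernel-verified Lean document; each statement's English description precedes it below -/
import Mathlib

section
/- Let γ_0 : (t_0, ∞) → ℂ be an admissible curve, let t_1 > t_0, and let γ := γ_0|_{(t_1, ∞)} be its restriction. Then for every a ∉ γ_0([t_1, ∞)) one has α(γ, a) ≤ α(γ', 0) + 1/2. -/
open Filter Topology Set MeasureTheory
open scoped ENNReal Real

/-- The variation number `α(γ|_{(t₀,∞)}, a)` of a curve `γ` around `a`. -/
noncomputable def variation (γ : ℝ → ℂ) (t0 : ℝ) (a : ℂ) : ℝ≥0∞ :=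
  ENNReal.ofReal (1 / (2 * Real.pi)) *
    ∫⁻ t in Set.Ioi t0, ENNReal.ofReal |(deriv γ t / (γ t - a)).im|

/-- An admissible curve on `(t₀, ∞)`: injective, `C²`, nonvanishing derivative, and with
`|γ(t)| = t + O(1)`, `|γ'(t)| = 1 + O(1/t)`, `|γ''(t)| = O(1/t²)` as `t → ∞`. -/
def Admissible (t0 : ℝ) (γ : ℝ → ℂ) : Prop :=
  Set.InjOn γ (Set.Ioi t0) ∧ ContDiffOn ℝ 2 γ (Set.Ioi t0) ∧
  (∀ t ∈ Set.Ioi t0, deriv γ t ≠ 0) ∧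
  (∃ c : ℝ, ∀ᶠ t in Filter.atTop, |‖γ t‖ - t| ≤ c) ∧
  (∃ c : ℝ, ∀ᶠ t in Filter.atTop, |‖deriv γ t‖ - 1| ≤ c / t) ∧
  (∃ c : ℝ, ∀ᶠ t in Filter.atTop, ‖deriv (deriv γ) t‖ ≤ c / t ^ 2)

noncomputable def clampf (ε : ℝ) (x : ℝ) : ℝ := max (-1) (min 1 (Real.sin x / ε))

noncomputable def clampG (ε : ℝ) (x : ℝ) : ℝ := ∫ s in (0:ℝ)..x, clampf ε s

lemma clamp_odd (z : ℝ) : max (-1) (min 1 (-z)) = -(max (-1) (min 1 z)) := by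
  rcases le_total z (-1) with h | h
  · rw [min_eq_left (by linarith), max_eq_right (by norm_num),
      min_eq_right (by linarith), max_eq_left h]
    norm_num
  · rcases le_total 1 z with h2 | h2
    · rw [min_eq_right (by linarith), max_eq_left (by linarith),
        min_eq_left h2, max_eq_right (by norm_num)]
    · rw [min_eq_right (by linarith), max_eq_right (by linarith),
        min_eq_right h2, max_eq_right h]

lemma clampf_cont (ε : ℝ) : Continuous (clampf ε) := by
  unfold clampf
  exact continuous_const.max (continuous_const.min (Real.continuous_sin.div_const ε))

lemma clampf_abs_le_one (ε x : ℝ) : |clampf ε x| ≤ 1 := by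
  unfold clampf
  rw [abs_le]
  exact ⟨le_max_left _ _, max_le (by norm_num) (min_le_left _ _)⟩

lemma clampf_mul (ε : ℝ) (hε : 0 < ε) (x : ℝ) :
    |Real.sin x| - ε ≤ clampf ε x * Real.sin x := by
  unfold clampf
  set y := Real.sin x with hy
  clear_value y
  rcases le_total ε y with h | h
  · rw [min_eq_left ((le_div_iff₀ hε).2 (by linarith)), max_eq_right (by norm_num),
      abs_of_nonneg (by linarith)]
    linarith
  · rcases le_total y (-ε) with h2 | h2
    · rw [min_eq_right ((div_le_iff₀ hε).2 (by nlinarith)),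
        max_eq_left ((div_le_iff₀ hε).2 (by linarith)), abs_of_nonpos (by linarith)]
      linarith
    · rw [min_eq_right ((div_le_iff₀ hε).2 (by nlinarith)),
        max_eq_right ((le_div_iff₀ hε).2 (by nlinarith))]
      have h4 : y / ε * y = y ^ 2 / ε := by ring
      have h6 : 0 ≤ y ^ 2 / ε := by positivity
      rcases abs_cases y with ⟨h5, _⟩ | ⟨h5, _⟩ <;> rw [h4, h5] <;> linarith

lemma clampf_nonneg_on {ε : ℝ} (hε : 0 < ε) {x : ℝ} (h0 : 0 ≤ x) (h1 : x ≤ π) :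
    0 ≤ clampf ε x := by
  have hs := Real.sin_nonneg_of_nonneg_of_le_pi h0 h1
  exact le_max_of_le_right (le_min (by norm_num) (by positivity))

lemma clampf_nonpos_on {ε : ℝ} (hε : 0 < ε) {x : ℝ} (h0 : π ≤ x) (h1 : x ≤ 2 * π) :
    clampf ε x ≤ 0 := by
  have hs : Real.sin x ≤ 0 := by
    have : Real.sin (x - π + π) = -Real.sin (x - π) := Real.sin_add_pi _
    have h2 : Real.sin (x - π) ≥ 0 :=
      Real.sin_nonneg_of_nonneg_of_le_pi (by linarith) (by linarith)
    have h3 : x - π + π = x := by ring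
    rw [h3] at this
    linarith
  have hz : Real.sin x / ε ≤ 0 := div_nonpos_of_nonpos_of_nonneg hs hε.le
  exact max_le (by norm_num) (le_trans (min_le_right _ _) hz)

lemma clampf_anti (ε : ℝ) (x : ℝ) : clampf ε (x + π) = - clampf ε x := by
  unfold clampf
  rw [Real.sin_add_pi, neg_div, clamp_odd]

lemma clampf_periodic (ε : ℝ) : Function.Periodic (clampf ε) (2 * π) :=
  Function.Antiperiodic.periodic_two_mul (fun x => clampf_anti ε x)

lemma clampG_hasDerivAt (ε x : ℝ) : HasDerivAt (clampG ε) (clampf ε x) x :=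
  intervalIntegral.integral_hasDerivAt_right
    ((clampf_cont ε).intervalIntegrable _ _)
    ((clampf_cont ε).stronglyMeasurable.stronglyMeasurableAtFilter)
    (clampf_cont ε).continuousAt

lemma clampG_two_pi (ε : ℝ) : clampG ε (2 * π) = 0 := by
  have h1 : (∫ s in (0:ℝ)..π, clampf ε s) + (∫ s in π..(2*π), clampf ε s)
      = clampG ε (2 * π) :=
    intervalIntegral.integral_add_adjacent_intervals
      ((clampf_cont ε).intervalIntegrable _ _) ((clampf_cont ε).intervalIntegrable _ _)
  have h2 : (∫ s in π..(2*π), clampf ε s) = ∫ s in (0:ℝ)..π, clampf ε (s + π) := by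
    rw [intervalIntegral.integral_comp_add_right (fun s => clampf ε s) π]
    norm_num [two_mul]
  have h3 : (∫ s in (0:ℝ)..π, clampf ε (s + π)) = -∫ s in (0:ℝ)..π, clampf ε s := by
    simp only [clampf_anti, intervalIntegral.integral_neg]
  rw [← h1, h2, h3]; ring

lemma clampG_periodic (ε : ℝ) : Function.Periodic (clampG ε) (2 * π) := by
  intro x
  have h1 : clampG ε x + (∫ s in x..(x + 2*π), clampf ε s) = clampG ε (x + 2 * π) :=
    intervalIntegral.integral_add_adjacent_intervals
      ((clampf_cont ε).intervalIntegrable _ _) ((clampf_cont ε).intervalIntegrable _ _)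
  have h2 : (∫ s in x..(x + 2*π), clampf ε s) = ∫ s in (0:ℝ)..(0 + 2*π), clampf ε s :=
    (clampf_periodic ε).intervalIntegral_add_eq x 0
  have h3 : (∫ s in (0:ℝ)..(0 + 2*π), clampf ε s) = clampG ε (2 * π) := by
    norm_num [clampG]
  rw [← h1, h2, h3, clampG_two_pi]; ring

lemma clampG_bounds_Icc {ε : ℝ} (hε : 0 < ε) {x : ℝ} (h0 : 0 ≤ x) (h1 : x ≤ 2 * π) :
    clampG ε x ∈ Set.Icc 0 π := by
  rcases le_total x π with hx | hx
  · constructor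
    · exact intervalIntegral.integral_nonneg h0
        (fun u hu => clampf_nonneg_on hε hu.1 (le_trans hu.2 hx))
    · calc clampG ε x ≤ ∫ s in (0:ℝ)..x, (1:ℝ) := by
            apply intervalIntegral.integral_mono_on h0
              ((clampf_cont ε).intervalIntegrable _ _) (intervalIntegrable_const)
            intro s hs
            exact le_trans (le_abs_self _) (clampf_abs_le_one ε s)
         _ = x := by simp
         _ ≤ π := hx
  · have hsplit : clampG ε π + (∫ s in π..x, clampf ε s) = clampG ε x :=
      intervalIntegral.integral_add_adjacent_intervals
        ((clampf_cont ε).intervalIntegrable _ _) ((clampf_cont ε).intervalIntegrable _ _)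
    have hsplit2 : clampG ε x + (∫ s in x..(2*π), clampf ε s) = clampG ε (2*π) :=
      intervalIntegral.integral_add_adjacent_intervals
        ((clampf_cont ε).intervalIntegrable _ _) ((clampf_cont ε).intervalIntegrable _ _)
    have hb1 : (∫ s in π..x, clampf ε s) ≤ 0 := by
      have : (∫ s in π..x, clampf ε s) ≤ ∫ s in π..x, (0:ℝ) := by
        apply intervalIntegral.integral_mono_on hx
          ((clampf_cont ε).intervalIntegrable _ _) (intervalIntegrable_const)
        exact fun s hs => clampf_nonpos_on hε hs.1 (le_trans hs.2 h1)
      simpa using this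
    have hb2 : (∫ s in x..(2*π), clampf ε s) ≤ 0 := by
      have : (∫ s in x..(2*π), clampf ε s) ≤ ∫ s in x..(2*π), (0:ℝ) := by
        apply intervalIntegral.integral_mono_on h1
          ((clampf_cont ε).intervalIntegrable _ _) (intervalIntegrable_const)
        exact fun s hs => clampf_nonpos_on hε (le_trans hx hs.1) hs.2
      simpa using this
    have hGπ : clampG ε π ≤ π := by
      calc clampG ε π ≤ ∫ s in (0:ℝ)..π, (1:ℝ) := by
            apply intervalIntegral.integral_mono_on Real.pi_pos.le
              ((clampf_cont ε).intervalIntegrable _ _) (intervalIntegrable_const)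
            exact fun s hs => le_trans (le_abs_self _) (clampf_abs_le_one ε s)
        _ = π := by simp
    have h2π := clampG_two_pi ε
    constructor
    · linarith
    · linarith

lemma clampG_bounds {ε : ℝ} (hε : 0 < ε) (x : ℝ) : clampG ε x ∈ Set.Icc 0 π := by
  have h2π : (0:ℝ) < 2 * π := by positivity
  set n : ℤ := ⌊x / (2 * π)⌋ with hn
  have h0 : 0 ≤ x - n * (2 * π) := Int.sub_floor_div_mul_nonneg x h2π
  have h1 : x - n * (2 * π) < 2 * π := Int.sub_floor_div_mul_lt x h2π
  have := (clampG_periodic ε).sub_int_mul_eq (x := x) n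
  rw [← this]
  exact clampG_bounds_Icc hε h0 h1.le

lemma key_abstract (u v ρ ψ : ℝ → ℝ) (c T : ℝ) (hcT : c ≤ T)
    (hu : ∀ t ∈ Set.Icc c T, u t = Real.exp (ρ t) * Real.sin (ψ t))
    (hψ : ∀ t ∈ Set.Icc c T, HasDerivAt ψ (v t - u t) t)
    (hucont : ContinuousOn u (Set.Icc c T))
    (hvcont : ContinuousOn v (Set.Icc c T))
    (hρcont : ContinuousOn ρ (Set.Icc c T)) :
    (∫ t in c..T, |u t|) ≤ (∫ t in c..T, |v t|) + π := by
  set C := ∫ t in c..T, Real.exp (ρ t) with hC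
  have hψcont : ContinuousOn ψ (Set.Icc c T) :=
    fun t ht => (hψ t ht).continuousAt.continuousWithinAt
  have hCnn : 0 ≤ C := intervalIntegral.integral_nonneg hcT (fun t _ => (Real.exp_pos _).le)
  have key : ∀ ε : ℝ, 0 < ε →
      (∫ t in c..T, |u t|) ≤ (∫ t in c..T, |v t|) + π + ε * C := by
    intro ε hε
    have hH : ∀ t ∈ Set.Icc c T,
        HasDerivAt (fun s => clampG ε (ψ s)) (clampf ε (ψ t) * (v t - u t)) t :=
      fun t ht => (clampG_hasDerivAt ε (ψ t)).comp t (hψ t ht)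
    have hHdcont : ContinuousOn (fun t => clampf ε (ψ t) * (v t - u t)) (Set.Icc c T) :=
      ((clampf_cont ε).comp_continuousOn hψcont).mul (hvcont.sub hucont)
    have hexpcont : ContinuousOn (fun t => ε * Real.exp (ρ t)) (Set.Icc c T) :=
      continuousOn_const.mul (Real.continuous_exp.comp_continuousOn hρcont)
    have hint1 : IntervalIntegrable (fun t => |u t|) volume c T :=
      (hucont.abs).intervalIntegrable_of_Icc hcT
    have hintv : IntervalIntegrable (fun t => |v t|) volume c T :=
      (hvcont.abs).intervalIntegrable_of_Icc hcT
    have hinte : IntervalIntegrable (fun t => ε * Real.exp (ρ t)) volume c T :=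
      hexpcont.intervalIntegrable_of_Icc hcT
    have hintH : IntervalIntegrable (fun t => clampf ε (ψ t) * (v t - u t)) volume c T :=
      hHdcont.intervalIntegrable_of_Icc hcT
    have hint2 : IntervalIntegrable
        (fun t => |v t| + ε * Real.exp (ρ t) - clampf ε (ψ t) * (v t - u t)) volume c T :=
      (hintv.add hinte).sub hintH
    have hpt : ∀ t ∈ Set.Icc c T,
        |u t| ≤ |v t| + ε * Real.exp (ρ t) - clampf ε (ψ t) * (v t - u t) := by
      intro t ht
      have h1 := clampf_mul ε hε (ψ t)
      have h2 := clampf_abs_le_one ε (ψ t)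
      have he : (0:ℝ) < Real.exp (ρ t) := Real.exp_pos _
      have hu' := hu t ht
      have h3 : clampf ε (ψ t) * v t ≤ |v t| := by
        calc clampf ε (ψ t) * v t ≤ |clampf ε (ψ t) * v t| := le_abs_self _
          _ = |clampf ε (ψ t)| * |v t| := abs_mul _ _
          _ ≤ 1 * |v t| := mul_le_mul_of_nonneg_right h2 (abs_nonneg _)
          _ = |v t| := one_mul _
      have h4 : |u t| = Real.exp (ρ t) * |Real.sin (ψ t)| := by
        rw [hu', abs_mul, abs_of_pos he]
      have h5 : clampf ε (ψ t) * u t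
          = Real.exp (ρ t) * (clampf ε (ψ t) * Real.sin (ψ t)) := by rw [hu']; ring
      have h6 := mul_le_mul_of_nonneg_left h1 he.le
      have h7 : clampf ε (ψ t) * (v t - u t)
          = clampf ε (ψ t) * v t - clampf ε (ψ t) * u t := by ring
      nlinarith [h3, h4, h5, h6, h7]
    have hftc : (∫ t in c..T, clampf ε (ψ t) * (v t - u t))
        = clampG ε (ψ T) - clampG ε (ψ c) := by
      apply intervalIntegral.integral_eq_sub_of_hasDerivAt
      · intro t ht
        rw [Set.uIcc_of_le hcT] at ht
        exact hH t ht
      · exact hintH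
    have hmono := intervalIntegral.integral_mono_on hcT hint1 hint2 hpt
    have hsplit : (∫ t in c..T,
          (|v t| + ε * Real.exp (ρ t) - clampf ε (ψ t) * (v t - u t)))
        = (∫ t in c..T, |v t|) + ε * C - (clampG ε (ψ T) - clampG ε (ψ c)) := by
      rw [intervalIntegral.integral_sub (hintv.add hinte) hintH,
        intervalIntegral.integral_add hintv hinte, hftc,
        intervalIntegral.integral_const_mul]
    have hb1 := clampG_bounds hε (ψ T)
    have hb2 := clampG_bounds hε (ψ c)
    rw [hsplit] at hmono
    have := hb1.1
    have := hb2.2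
    linarith
  apply le_of_forall_pos_le_add
  intro ε' hε'
  have hεpos : 0 < ε' / (C + 1) := by positivity
  have h := key (ε' / (C + 1)) hεpos
  have : ε' / (C + 1) * C ≤ ε' := by
    rw [div_mul_eq_mul_div, div_le_iff₀ (by linarith)]
    nlinarith
  linarith

lemma compact_estimate (t0 t1 : ℝ) (γ : ℝ → ℂ) (a : ℂ)
    (hsmooth : ContDiffOn ℝ 2 γ (Set.Ioi t0))
    (hd : ∀ t ∈ Set.Ioi t0, deriv γ t ≠ 0)
    (h01 : t0 < t1)
    (hne : ∀ t ∈ Set.Ioi t1, γ t ≠ a)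
    (c T : ℝ) (hc : t1 < c) (hcT : c ≤ T) :
    (∫ t in c..T, |(deriv γ t / (γ t - a)).im|)
      ≤ (∫ t in c..T, |(deriv (deriv γ) t / deriv γ t).im|) + π := by
  have hopen : IsOpen (Set.Ioi t0) := isOpen_Ioi
  have hsub : Set.Ioi t1 ⊆ Set.Ioi t0 := Set.Ioi_subset_Ioi h01.le
  have hIcc : Set.Icc c T ⊆ Set.Ioi t1 := fun x hx => lt_of_lt_of_le hc hx.1
  have hγcont : ContinuousOn γ (Set.Ioi t0) := hsmooth.continuousOn
  have hd1cont : ContinuousOn (deriv γ) (Set.Ioi t0) :=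
    hsmooth.continuousOn_deriv_of_isOpen hopen (by norm_num)
  have hsmooth1 : ContDiffOn ℝ 1 (deriv γ) (Set.Ioi t0) :=
    hsmooth.deriv_of_isOpen hopen (by norm_num)
  have hd2cont : ContinuousOn (deriv (deriv γ)) (Set.Ioi t0) :=
    hsmooth1.continuousOn_deriv_of_isOpen hopen le_rfl
  have hγ' : ∀ t ∈ Set.Ioi t0, HasDerivAt γ (deriv γ t) t := by
    intro t ht
    exact (((hsmooth.differentiableOn (by norm_num)) t ht).differentiableAt
      (hopen.mem_nhds ht)).hasDerivAt
  have hγ'' : ∀ t ∈ Set.Ioi t0, HasDerivAt (deriv γ) (deriv (deriv γ) t) t := by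
    intro t ht
    exact (((hsmooth1.differentiableOn (by norm_num)) t ht).differentiableAt
      (hopen.mem_nhds ht)).hasDerivAt
  set w : ℝ → ℂ := fun t => deriv γ t / (γ t - a) with hwdef
  set q : ℝ → ℂ := fun t => deriv (deriv γ) t / deriv γ t - w t with hqdef
  have hne' : ∀ t ∈ Set.Ioi t1, γ t - a ≠ 0 := fun t ht => sub_ne_zero.2 (hne t ht)
  have hwcont : ContinuousOn w (Set.Ioi t1) :=
    (hd1cont.mono hsub).div ((hγcont.mono hsub).sub continuousOn_const) hne'
  have hqcont : ContinuousOn q (Set.Ioi t1) :=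
    ((hd2cont.mono hsub).div (hd1cont.mono hsub) (fun t ht => hd t (hsub ht))).sub hwcont
  have hw : ∀ t ∈ Set.Ioi t1, HasDerivAt w (q t * w t) t := by
    intro t ht
    have h3 : HasDerivAt (fun s => γ s - a) (deriv γ t) t := (hγ' t (hsub ht)).sub_const a
    have h4 : HasDerivAt w ((deriv (deriv γ) t * (γ t - a) - deriv γ t * deriv γ t) / (γ t - a) ^ 2) t :=
      (hγ'' t (hsub ht)).div h3 (hne' t ht)
    convert h4 using 1
    have e1 := hd t (hsub ht)
    have e2 := hne' t ht
    simp only [hqdef, hwdef]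
    field_simp
  set L : ℝ → ℂ := fun t => Complex.log (w c) + ∫ s in c..t, q s with hLdef
  have hcmem : c ∈ Set.Ioi t1 := hc
  have hqint : ∀ t ∈ Set.Ioi t1, IntervalIntegrable q volume c t := by
    intro t ht
    apply ContinuousOn.intervalIntegrable
    exact hqcont.mono (Set.ordConnected_Ioi.uIcc_subset hcmem ht)
  have hL : ∀ t ∈ Set.Ioi t1, HasDerivAt L (q t) t := by
    intro t ht
    have h1 : HasDerivAt (fun t => ∫ s in c..t, q s) (q t) t :=
      intervalIntegral.integral_hasDerivAt_right (hqint t ht)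
        (hqcont.stronglyMeasurableAtFilter isOpen_Ioi t ht)
        (hqcont.continuousAt (isOpen_Ioi.mem_nhds ht))
    exact h1.const_add _
  have hLcont : ContinuousOn L (Set.Ioi t1) :=
    fun t ht => (hL t ht).continuousAt.continuousWithinAt
  have hwcne : w c ≠ 0 :=
    div_ne_zero (hd c (hsub hcmem)) (hne' c hcmem)
  have hexp : ∀ t ∈ Set.Icc c T, w t = Complex.exp (L t) := by
    have hconst : ∀ t ∈ Set.Icc c T, w t * Complex.exp (-L t)
        = w c * Complex.exp (-L c) := by
      apply constant_of_has_deriv_right_zero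
      · exact ((hwcont.mono hIcc).mul
          ((hLcont.mono hIcc).neg.cexp))
      · intro x hx
        have hx' : x ∈ Set.Ioi t1 := hIcc (Set.Ico_subset_Icc_self hx)
        have hF : HasDerivAt (fun t => w t * Complex.exp (-L t))
            (q x * w x * Complex.exp (-L x) + w x * (Complex.exp (-L x) * -q x)) x :=
          (hw x hx').mul ((hL x hx').neg.cexp)
        have : q x * w x * Complex.exp (-L x) + w x * (Complex.exp (-L x) * -q x) = 0 := by
          ring
        rw [this] at hF
        exact hF.hasDerivWithinAt
    intro t ht
    have h1 := hconst t ht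
    have hLc : L c = Complex.log (w c) := by
      simp [hLdef]
    have hFc : w c * Complex.exp (-L c) = 1 := by
      rw [hLc, Complex.exp_neg, Complex.exp_log hwcne]
      field_simp
    rw [hFc] at h1
    have h2 : Complex.exp (-L t) * Complex.exp (L t) = 1 := by
      rw [← Complex.exp_add]; simp
    calc w t = w t * (Complex.exp (-L t) * Complex.exp (L t)) := by rw [h2, mul_one]
      _ = (w t * Complex.exp (-L t)) * Complex.exp (L t) := by ring
      _ = Complex.exp (L t) := by rw [h1, one_mul]
  -- now apply the abstract lemma
  apply key_abstract (fun t => (deriv γ t / (γ t - a)).im)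
    (fun t => (deriv (deriv γ) t / deriv γ t).im)
    (fun t => (L t).re) (fun t => (L t).im) c T hcT
  · intro t ht
    have := hexp t ht
    show (w t).im = _
    rw [this, Complex.exp_im]
  · intro t ht
    have ht' : t ∈ Set.Ioi t1 := hIcc ht
    have h1 : HasDerivAt (fun t => (L t).im) ((q t).im) t :=
      (Complex.imCLM.hasFDerivAt).comp_hasDerivAt t (hL t ht')
    have h2 : (q t).im = (deriv (deriv γ) t / deriv γ t).im - (deriv γ t / (γ t - a)).im := by
      simp [hqdef, hwdef]
    rwa [h2] at h1
  · exact (Complex.continuous_im.comp_continuousOn (hwcont.mono hIcc))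
  · exact (Complex.continuous_im.comp_continuousOn
      (((hd2cont.mono hsub).div (hd1cont.mono hsub)
        (fun t ht => hd t (hsub ht))).mono hIcc))
  · exact (Complex.continuous_re.comp_continuousOn (hLcont.mono hIcc))


/-- **Variation Numbers of a Curve and its Derivative.**
Let `γ₀` be an admissible curve on `(t₀, ∞)` and `γ` its restriction to `(t₁, ∞)` for
some `t₁ > t₀`. Then for every `a ∉ γ₀([t₁, ∞))`,
`α(γ, a) ≤ α(γ', 0) + 1/2`. -/
theorem variation_number_curve_and_derivative (t0 t1 : ℝ) (γ : ℝ → ℂ)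
    (h : Admissible t0 γ) (h01 : t0 < t1) (a : ℂ) (ha : a ∉ γ '' Set.Ici t1) :
    variation γ t1 a ≤ variation (deriv γ) t1 0 + ENNReal.ofReal (1 / 2) := by
  obtain ⟨hinj, hsmooth, hd, -⟩ := h
  have hne : ∀ t ∈ Set.Ioi t1, γ t ≠ a := by
    intro t ht hEq
    exact ha ⟨t, Set.mem_Ici.2 (le_of_lt ht), hEq⟩
  set u : ℝ → ℝ := fun t => |(deriv γ t / (γ t - a)).im| with hudef
  set v : ℝ → ℝ := fun t => |(deriv (deriv γ) t / deriv γ t).im| with hvdef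
  -- continuity facts
  have hopen : IsOpen (Set.Ioi t0) := isOpen_Ioi
  have hsub : Set.Ioi t1 ⊆ Set.Ioi t0 := Set.Ioi_subset_Ioi h01.le
  have hd1cont : ContinuousOn (deriv γ) (Set.Ioi t0) :=
    hsmooth.continuousOn_deriv_of_isOpen hopen (by norm_num)
  have hsmooth1 : ContDiffOn ℝ 1 (deriv γ) (Set.Ioi t0) :=
    hsmooth.deriv_of_isOpen hopen (by norm_num)
  have hd2cont : ContinuousOn (deriv (deriv γ)) (Set.Ioi t0) :=
    hsmooth1.continuousOn_deriv_of_isOpen hopen le_rfl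
  have hne' : ∀ t ∈ Set.Ioi t1, γ t - a ≠ 0 := fun t ht => sub_ne_zero.2 (hne t ht)
  have hucont : ContinuousOn u (Set.Ioi t1) :=
    (Complex.continuous_im.comp_continuousOn
      (((hd1cont.mono hsub).div ((hsmooth.continuousOn.mono hsub).sub continuousOn_const)
        hne'))).abs
  have hvcont : ContinuousOn v (Set.Ioi t1) :=
    (Complex.continuous_im.comp_continuousOn
      ((hd2cont.mono hsub).div (hd1cont.mono hsub) (fun t ht => hd t (hsub ht)))).abs
  -- the exhausting sequence
  set A : ℕ → Set ℝ := fun n => Set.Ioc (t1 + 1 / ((n : ℝ) + 1)) (t1 + 1 + n) with hA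
  have hmono : Monotone A := by
    intro n m hnm
    apply Set.Ioc_subset_Ioc
    · have hcast : (n : ℝ) ≤ m := Nat.cast_le.2 hnm
      have : 1 / ((m : ℝ) + 1) ≤ 1 / ((n : ℝ) + 1) := by
        apply one_div_le_one_div_of_le (by positivity)
        linarith
      linarith
    · have : (n : ℝ) ≤ m := Nat.cast_le.2 hnm
      linarith
  have hUnion : (⋃ n, A n) = Set.Ioi t1 := by
    apply Set.Subset.antisymm
    · intro x hx
      obtain ⟨n, hn⟩ := Set.mem_iUnion.1 hx
      have : (0:ℝ) < 1 / ((n : ℝ) + 1) := by positivity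
      exact lt_of_lt_of_le (by linarith) hn.1.le
    · intro x hx
      have hx' : (0:ℝ) < x - t1 := sub_pos.2 hx
      obtain ⟨n, hn⟩ := exists_nat_ge (max (1 / (x - t1)) (x - t1 - 1))
      refine Set.mem_iUnion.2 ⟨n, ?_, ?_⟩
      · have h1 : 1 / (x - t1) ≤ n := le_trans (le_max_left _ _) hn
        have h2 : 1 / ((n : ℝ) + 1) < x - t1 := by
          rw [div_lt_iff₀ (by positivity)]
          rw [div_le_iff₀ hx'] at h1
          nlinarith
        linarith
      · have h1 : x - t1 - 1 ≤ n := le_trans (le_max_right _ _) hn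
        linarith
  -- per-piece estimate
  have hpiece : ∀ n : ℕ, (∫⁻ t in A n, ENNReal.ofReal (u t))
      ≤ (∫⁻ t in Set.Ioi t1, ENNReal.ofReal (v t)) + ENNReal.ofReal π := by
    intro n
    set c := t1 + 1 / ((n : ℝ) + 1) with hcdef
    set T := t1 + 1 + (n : ℝ) with hTdef
    have hc : t1 < c := by
      have : (0:ℝ) < 1 / ((n : ℝ) + 1) := by positivity
      rw [hcdef]
      linarith
    have hcT : c ≤ T := by
      have h1 : 1 / ((n : ℝ) + 1) ≤ 1 := by
        rw [div_le_one (by positivity)]; linarith [Nat.cast_nonneg (α := ℝ) n]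
      have : (0:ℝ) ≤ n := Nat.cast_nonneg n
      simp only [hcdef, hTdef]; linarith
    have hIcc : Set.Icc c T ⊆ Set.Ioi t1 := fun x hx => lt_of_lt_of_le hc hx.1
    have hIoc : Set.Ioc c T ⊆ Set.Ioi t1 := fun x hx => lt_of_le_of_lt hc.le hx.1
    have huint : IntegrableOn u (Set.Ioc c T) volume :=
      ((hucont.mono hIcc).integrableOn_Icc).mono_set Set.Ioc_subset_Icc_self
    have hvint : IntegrableOn v (Set.Ioc c T) volume :=
      ((hvcont.mono hIcc).integrableOn_Icc).mono_set Set.Ioc_subset_Icc_self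
    have h1 : (∫⁻ t in A n, ENNReal.ofReal (u t))
        = ENNReal.ofReal (∫ t in c..T, u t) := by
      rw [intervalIntegral.integral_of_le hcT,
        ← MeasureTheory.ofReal_integral_eq_lintegral_ofReal huint
          (ae_of_all _ (fun t => abs_nonneg _))]
    have h2 : ENNReal.ofReal (∫ t in c..T, v t)
        = ∫⁻ t in Set.Ioc c T, ENNReal.ofReal (v t) := by
      rw [intervalIntegral.integral_of_le hcT,
        MeasureTheory.ofReal_integral_eq_lintegral_ofReal hvint
          (ae_of_all _ (fun t => abs_nonneg _))]
    have hkey := compact_estimate t0 t1 γ a hsmooth hd h01 hne c T hc hcT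
    calc (∫⁻ t in A n, ENNReal.ofReal (u t))
        = ENNReal.ofReal (∫ t in c..T, u t) := h1
      _ ≤ ENNReal.ofReal ((∫ t in c..T, v t) + π) := ENNReal.ofReal_le_ofReal hkey
      _ = ENNReal.ofReal (∫ t in c..T, v t) + ENNReal.ofReal π := by
          rw [ENNReal.ofReal_add
            (intervalIntegral.integral_nonneg hcT (fun t _ => abs_nonneg _)) Real.pi_pos.le]
      _ = (∫⁻ t in Set.Ioc c T, ENNReal.ofReal (v t)) + ENNReal.ofReal π := by rw [h2]
      _ ≤ (∫⁻ t in Set.Ioi t1, ENNReal.ofReal (v t)) + ENNReal.ofReal π := by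
          exact add_le_add_left (lintegral_mono_set hIoc) _
  -- assemble
  have hmain : (∫⁻ t in Set.Ioi t1, ENNReal.ofReal (u t))
      ≤ (∫⁻ t in Set.Ioi t1, ENNReal.ofReal (v t)) + ENNReal.ofReal π := by
    have heq : (∫⁻ t in Set.Ioi t1, ENNReal.ofReal (u t))
        = ⨆ n, ∫⁻ t in A n, ENNReal.ofReal (u t) := by
      conv_lhs => rw [← hUnion]
      exact setLIntegral_iUnion_of_directed _ hmono.directed_le
    rw [heq]
    exact iSup_le hpiece
  unfold variation
  simp only [sub_zero]
  calc ENNReal.ofReal (1 / (2 * π)) * (∫⁻ t in Set.Ioi t1, ENNReal.ofReal (u t))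
      ≤ ENNReal.ofReal (1 / (2 * π)) *
        ((∫⁻ t in Set.Ioi t1, ENNReal.ofReal (v t)) + ENNReal.ofReal π) :=
        mul_le_mul_right hmain _
    _ = ENNReal.ofReal (1 / (2 * π)) * (∫⁻ t in Set.Ioi t1, ENNReal.ofReal (v t))
        + ENNReal.ofReal (1 / (2 * π)) * ENNReal.ofReal π := by rw [mul_add]
    _ = ENNReal.ofReal (1 / (2 * π)) * (∫⁻ t in Set.Ioi t1, ENNReal.ofReal (v t))
        + ENNReal.ofReal (1 / 2) := by
        rw [← ENNReal.ofReal_mul (by positivity)]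
        congr 2
        have hπ : (π:ℝ) ≠ 0 := Real.pi_ne_zero
        field_simp
        try ring
end

section
/- Let γ_0 : (t_0, ∞) → ℂ be an admissible curve with α(γ_0', 0) ≤ 1/2. For every n ∈ ℕ choose a point a_n ∈ ℂ outside the closure of γ_n((t_0, ∞)) and a continuous curve γ_{n+1} : (t_0, ∞) → ℂ with exp(γ_{n+1}(t)) = γ_n(t) − a_n for all t. Then for every n ∈ ℕ, every t_1 > t_0, and every b outside the closure of γ_n((t_1, ∞)), one has α(γ_n|_{(t_1, ∞)}, b) ≤ 2^n and α(γ_n'|_{(t_1, ∞)}, 0) ≤ 2^n − 1/2. -/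
open Filter Topology Set MeasureTheory
open scoped ENNReal Real
open intervalIntegral
open scoped NNReal

lemma sign_meas : Measurable (Real.sign) := by
  unfold Real.sign
  apply Measurable.ite (measurableSet_lt measurable_id measurable_const) measurable_const
  exact Measurable.ite (measurableSet_lt measurable_const measurable_id) measurable_const measurable_const

lemma sign_sin_meas : Measurable (fun s => Real.sign (Real.sin s)) :=
  sign_meas.comp Real.continuous_sin.measurable

lemma abs_sign_le (r : ℝ) : |Real.sign r| ≤ 1 := by
  rcases Real.sign_apply_eq r with h | h | h <;> rw [h] <;> norm_num

lemma sign_sin_intble (a b : ℝ) : IntervalIntegrable (fun s => Real.sign (Real.sin s)) volume a b := by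
  rw [intervalIntegrable_iff]
  haveI : IsFiniteMeasure (volume.restrict (Set.uIoc a b)) := by
    constructor; rw [Measure.restrict_apply_univ]; exact measure_Ioc_lt_top
  apply Integrable.mono' (integrable_const (1:ℝ)) (sign_sin_meas.aestronglyMeasurable.restrict)
  exact Filter.Eventually.of_forall (fun x => by simpa using abs_sign_le (Real.sin x))

noncomputable def saw (x : ℝ) : ℝ := -∫ s in (0:ℝ)..x, Real.sign (Real.sin s)

lemma saw_sub (x y : ℝ) : saw y - saw x = -∫ s in x..y, Real.sign (Real.sin s) := by
  have h := integral_add_adjacent_intervals (sign_sin_intble 0 x) (sign_sin_intble x y)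
  simp only [saw]
  linarith [h]

lemma saw_lipschitz : LipschitzWith 1 saw := by
  rw [lipschitzWith_iff_dist_le_mul]
  intro x y
  rw [Real.dist_eq, Real.dist_eq]
  have h : saw x - saw y = -∫ s in y..x, Real.sign (Real.sin s) := saw_sub y x
  rw [h, abs_neg]
  push_cast
  rw [one_mul]
  rw [← Real.norm_eq_abs (∫ s in y..x, _)]
  have := intervalIntegral.norm_integral_le_of_norm_le_const (C := 1)
    (f := fun s => Real.sign (Real.sin s)) (a := y) (b := x)
    (fun z _ => by simpa using abs_sign_le (Real.sin z))
  simpa [abs_sub_comm x y] using this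

lemma ae_ne_real (c : ℝ) : ∀ᵐ (s : ℝ), s ≠ c := by
  have : (volume : Measure ℝ) {c} = 0 := measure_singleton c
  rw [measure_eq_zero_iff_ae_notMem] at this
  simpa using this

lemma integral_sign_sin_0_pi : ∫ s in (0:ℝ)..π, Real.sign (Real.sin s) = π := by
  have h : ∫ s in (0:ℝ)..π, Real.sign (Real.sin s) = ∫ s in (0:ℝ)..π, (1:ℝ) := by
    apply intervalIntegral.integral_congr_ae
    filter_upwards [ae_ne_real π] with s hs hmem
    rw [Set.uIoc_of_le Real.pi_pos.le] at hmem
    exact Real.sign_of_pos (Real.sin_pos_of_pos_of_lt_pi hmem.1 (lt_of_le_of_ne hmem.2 hs))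
  rw [h]; simp

lemma integral_sign_sin_pi_2pi : ∫ s in π..(2*π), Real.sign (Real.sin s) = -π := by
  have h : ∫ s in π..(2*π), Real.sign (Real.sin s) = ∫ s in π..(2*π), (-1:ℝ) := by
    apply intervalIntegral.integral_congr_ae
    filter_upwards [ae_ne_real (2*π)] with s hs hmem
    rw [Set.uIoc_of_le (by linarith [Real.pi_pos])] at hmem
    apply Real.sign_of_neg
    have hlt : s < 2*π := lt_of_le_of_ne hmem.2 hs
    have : Real.sin (s - π) > 0 := Real.sin_pos_of_pos_of_lt_pi (by linarith [hmem.1])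
      (by linarith)
    have hs2 : Real.sin (s - π) = -Real.sin s := by
      rw [Real.sin_sub]; simp
    linarith [hs2 ▸ this]
  rw [h]; simp; ring

lemma saw_periodic : Function.Periodic saw (2*π) := by
  intro x
  have h := saw_sub x (x + 2*π)
  have hper : Function.Periodic (fun s => Real.sign (Real.sin s)) (2*π) := by
    intro s; simp [Real.sin_add_two_pi]
  have h2 := hper.intervalIntegral_add_eq x 0
  have h3 : ∫ s in (0:ℝ)..(0+2*π), Real.sign (Real.sin s) = 0 := by
    rw [zero_add, ← intervalIntegral.integral_add_adjacent_intervals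
      (sign_sin_intble 0 π) (sign_sin_intble π (2*π)),
      integral_sign_sin_0_pi, integral_sign_sin_pi_2pi]
    ring
  rw [h2, h3] at h
  linarith

lemma saw_zero : saw 0 = 0 := by simp [saw]

lemma saw_eq_on_0_pi {x : ℝ} (h0 : 0 ≤ x) (hpi : x ≤ π) : saw x = -x := by
  have h := saw_sub 0 x
  rw [saw_zero] at h
  have : ∫ s in (0:ℝ)..x, Real.sign (Real.sin s) = ∫ s in (0:ℝ)..x, (1:ℝ) := by
    apply intervalIntegral.integral_congr_ae
    filter_upwards [ae_ne_real π] with s hs hmem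
    rw [Set.uIoc_of_le h0] at hmem
    exact Real.sign_of_pos (Real.sin_pos_of_pos_of_lt_pi hmem.1
      (lt_of_le_of_ne (le_trans hmem.2 hpi) hs))
  rw [this] at h; simp at h; linarith

lemma saw_pi : saw π = -π := saw_eq_on_0_pi Real.pi_pos.le le_rfl

lemma saw_eq_on_pi_2pi {x : ℝ} (h0 : π ≤ x) (hpi : x ≤ 2*π) : saw x = x - 2*π := by
  have h := saw_sub π x
  rw [saw_pi] at h
  have : ∫ s in π..x, Real.sign (Real.sin s) = ∫ s in π..x, (-1:ℝ) := by
    apply intervalIntegral.integral_congr_ae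
    filter_upwards [ae_ne_real (2*π)] with s hs hmem
    rw [Set.uIoc_of_le h0] at hmem
    apply Real.sign_of_neg
    have hlt : s < 2*π := lt_of_le_of_ne (le_trans hmem.2 hpi) hs
    have : Real.sin (s - π) > 0 := Real.sin_pos_of_pos_of_lt_pi (by linarith [hmem.1])
      (by linarith)
    have hs2 : Real.sin (s - π) = -Real.sin s := by rw [Real.sin_sub]; simp
    linarith [hs2 ▸ this]
  rw [this] at h; simp at h; linarith

lemma saw_mem (x : ℝ) : saw x ∈ Set.Icc (-π) 0 := by
  obtain ⟨y, hy, hxy⟩ := saw_periodic.exists_mem_Ico₀ (by positivity) x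
  obtain ⟨hy1, hy2⟩ := hy
  rw [hxy]
  rcases le_or_gt y π with h | h
  · rw [saw_eq_on_0_pi hy1 h]
    exact ⟨by linarith, by linarith⟩
  · rw [saw_eq_on_pi_2pi h.le hy2.le]
    exact ⟨by linarith, by linarith⟩

lemma saw_hasDerivAt {x : ℝ} (hx : Real.sin x ≠ 0) :
    HasDerivAt saw (-Real.sign (Real.sin x)) x := by
  have hcont : ∀ᶠ y in 𝓝 x, Real.sign (Real.sin y) = Real.sign (Real.sin x) := by
    rcases hx.lt_or_gt with h | h
    · filter_upwards [Real.continuous_sin.continuousAt.eventually_lt_const h] with y hy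
      rw [Real.sign_of_neg hy, Real.sign_of_neg h]
    · filter_upwards [Real.continuous_sin.continuousAt.eventually_const_lt h] with y hy
      rw [Real.sign_of_pos hy, Real.sign_of_pos h]
  obtain ⟨δ, hδ, hball⟩ := Metric.eventually_nhds_iff.1 hcont
  have heq : ∀ᶠ y in 𝓝 x, saw y = saw x - Real.sign (Real.sin x) * (y - x) := by
    rw [Metric.eventually_nhds_iff]
    refine ⟨δ, hδ, fun y hy => ?_⟩
    have h1 : saw y - saw x = -∫ s in x..y, Real.sign (Real.sin s) := saw_sub x y
    have h2 : ∫ s in x..y, Real.sign (Real.sin s) = ∫ s in x..y, Real.sign (Real.sin x) := by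
      apply intervalIntegral.integral_congr
      intro z hz
      apply hball
      rw [Real.dist_eq] at hy ⊢
      have hb1 : y - x ≤ |y - x| := le_abs_self _
      have hb2 : x - y ≤ |y - x| := by rw [abs_sub_comm]; exact le_abs_self _
      have hzx : |z - x| ≤ |y - x| := by
        rw [abs_le]
        rcases Set.mem_uIcc.1 hz with ⟨h1', h2'⟩ | ⟨h1', h2'⟩ <;> constructor <;> linarith
      linarith
    rw [h2, intervalIntegral.integral_const, smul_eq_mul] at h1
    linarith
  have hmodel : HasDerivAt (fun y => saw x - Real.sign (Real.sin x) * (y - x))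
      (-Real.sign (Real.sin x)) x := by
    have hm := (((hasDerivAt_id x).sub_const x).const_mul (-Real.sign (Real.sin x))).const_add (saw x)
    exact (hm.congr_deriv (by ring)).congr_of_eventuallyEq
      (Filter.Eventually.of_forall fun y => by dsimp only [id]; ring)
  exact hmodel.congr_of_eventuallyEq (by filter_upwards [heq] with y hy; rw [hy])

lemma avg_tendsto {u : ℝ → ℝ} (hu : Continuous u) (b : ℝ) :
    Tendsto (fun n : ℕ => ((n:ℝ)+1) * ∫ t in b..(b + 1/((n:ℝ)+1)), u t) atTop (𝓝 (u b)) := by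
  rw [Metric.tendsto_atTop]
  intro ε hε
  obtain ⟨δ, hδ, hcont⟩ := Metric.continuousAt_iff.1 hu.continuousAt (ε/2) (by linarith)
  obtain ⟨N, hN⟩ := exists_nat_gt (1/δ)
  refine ⟨N, fun n hn => ?_⟩
  set h : ℝ := 1/((n:ℝ)+1) with hh
  have hhpos : 0 < h := by positivity
  have hNpos : 0 < (1:ℝ)/δ := by positivity
  have hN1 : (1:ℝ)/δ ≤ (n:ℝ) + 1 := by
    have : (N:ℝ) ≤ (n:ℝ) := Nat.cast_le.2 hn
    linarith
  have hhle : h < δ := by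
    have hstrict : (1:ℝ)/δ < (n:ℝ) + 1 := by
      have : (N:ℝ) ≤ (n:ℝ) := Nat.cast_le.2 hn
      linarith
    have := one_div_lt_one_div_of_lt hNpos hstrict
    rwa [one_div_one_div] at this
  have key : (∫ t in b..(b+h), u t) = (∫ t in b..(b+h), (u t - u b)) + h * u b := by
    rw [intervalIntegral.integral_sub (hu.intervalIntegrable _ _) (intervalIntegrable_const)]
    simp [mul_comm]
  have hbound : ‖∫ t in b..(b+h), (u t - u b)‖ ≤ (ε/2) * |b + h - b| := by
    apply intervalIntegral.norm_integral_le_of_norm_le_const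
    intro t ht
    rw [Set.uIoc_of_le (by linarith)] at ht
    obtain ⟨ht1, ht2⟩ := ht
    have hdist : dist t b < δ := by
      rw [Real.dist_eq, abs_lt]
      constructor
      · linarith
      · linarith [hhle]
    have := hcont hdist
    rw [Real.dist_eq] at this
    simpa [Real.norm_eq_abs] using this.le
  have hsimp : |b + h - b| = h := by rw [show b + h - b = h by ring, abs_of_pos hhpos]
  rw [hsimp] at hbound
  rw [Real.dist_eq]
  have habs : |(∫ t in b..(b+h), (u t - u b))| ≤ (ε/2) * h := by
    rwa [Real.norm_eq_abs] at hbound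
  have hexp : ((n:ℝ)+1) * (∫ t in b..(b+h), u t) - u b
      = ((n:ℝ)+1) * (∫ t in b..(b+h), (u t - u b)) := by
    rw [key, hh]
    field_simp
    ring
  rw [hexp, abs_mul, abs_of_pos (show (0:ℝ) < (n:ℝ)+1 by positivity)]
  calc ((n:ℝ)+1) * |∫ t in b..(b+h), (u t - u b)|
      ≤ ((n:ℝ)+1) * ((ε/2) * h) := mul_le_mul_of_nonneg_left habs (by positivity)
    _ = ε/2 := by rw [hh]; field_simp
    _ < ε := by linarith

lemma lipschitz_ftc {C : ℝ≥0} {u : ℝ → ℝ} (hu : LipschitzWith C u) (a b : ℝ) (hab : a ≤ b) :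
    ∫ t in a..b, deriv u t = u b - u a := by
  have hcont : Continuous u := hu.continuous
  set g : ℕ → ℝ → ℝ := fun n t => ((n:ℝ)+1) * (u (t + 1/((n:ℝ)+1)) - u t) with hg
  -- a.e. convergence of g n to deriv u
  have hae : ∀ᵐ t : ℝ, Tendsto (fun n => g n t) atTop (𝓝 (deriv u t)) := by
    filter_upwards [hu.ae_differentiableAt_real] with t ht
    have hd : HasDerivAt u (deriv u t) t := ht.hasDerivAt
    rw [hasDerivAt_iff_tendsto_slope] at hd
    have hseq : Tendsto (fun n : ℕ => t + 1/((n:ℝ)+1)) atTop (𝓝[≠] t) := by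
      apply tendsto_nhdsWithin_of_tendsto_nhds_of_eventually_within
      · have : Tendsto (fun n : ℕ => 1/((n:ℝ)+1)) atTop (𝓝 0) :=
          tendsto_one_div_add_atTop_nhds_zero_nat
        simpa using (tendsto_const_nhds.add this)
      · exact Filter.Eventually.of_forall (fun n => by
          simp only [Set.mem_compl_iff, Set.mem_singleton_iff]
          have : (0:ℝ) < 1/((n:ℝ)+1) := by positivity
          intro hcon
          nlinarith [hcon])
    have := hd.comp hseq
    apply this.congr
    intro n
    simp only [Function.comp_apply, slope_def_field, g]
    field_simp
    ring
  -- uniform bound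
  have hbound : ∀ n : ℕ, ∀ t : ℝ, |g n t| ≤ (C:ℝ) := by
    intro n t
    have h1 : |u (t + 1/((n:ℝ)+1)) - u t| ≤ (C:ℝ) * (1/((n:ℝ)+1)) := by
      have := hu.dist_le_mul (t + 1/((n:ℝ)+1)) t
      rw [Real.dist_eq, Real.dist_eq] at this
      rw [show t + 1/((n:ℝ)+1) - t = 1/((n:ℝ)+1) by ring,
        abs_of_pos (show (0:ℝ) < 1/((n:ℝ)+1) by positivity)] at this
      exact this
    rw [hg]
    simp only []
    rw [abs_mul, abs_of_pos (show (0:ℝ) < (n:ℝ)+1 by positivity)]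
    calc ((n:ℝ)+1) * |u (t + 1/((n:ℝ)+1)) - u t| ≤ ((n:ℝ)+1) * ((C:ℝ) * (1/((n:ℝ)+1))) :=
          mul_le_mul_of_nonneg_left h1 (by positivity)
      _ = (C:ℝ) := by field_simp
  -- dominated convergence on Ioc a b
  have hDCT : Tendsto (fun n => ∫ t in Set.Ioc a b, g n t) atTop
      (𝓝 (∫ t in Set.Ioc a b, deriv u t)) := by
    apply MeasureTheory.tendsto_integral_of_dominated_convergence (fun _ => (C:ℝ))
    · intro n
      exact (continuous_const.mul
        ((hcont.comp (continuous_id.add continuous_const)).sub hcont)).aestronglyMeasurable.restrict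
    · exact integrable_const _
    · intro n
      exact Filter.Eventually.of_forall (fun t => by
        rw [Real.norm_eq_abs]; exact hbound n t)
    · exact MeasureTheory.ae_restrict_of_ae hae
  -- compute ∫ g n
  have hgn : ∀ n : ℕ, ∫ t in Set.Ioc a b, g n t
      = ((n:ℝ)+1) * (∫ t in b..(b + 1/((n:ℝ)+1)), u t) -
        ((n:ℝ)+1) * (∫ t in a..(a + 1/((n:ℝ)+1)), u t) := by
    intro n
    set h : ℝ := 1/((n:ℝ)+1) with hh
    have hint : ∀ c d : ℝ, IntervalIntegrable u volume c d := fun c d => hcont.intervalIntegrable c d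
    have hint2 : ∀ c d : ℝ, IntervalIntegrable (fun t => u (t + h)) volume c d := fun c d =>
      (hcont.comp (continuous_id.add continuous_const)).intervalIntegrable c d
    have e1 : ∫ t in Set.Ioc a b, g n t
        = ((n:ℝ)+1) * ((∫ t in a..b, u (t + h)) - ∫ t in a..b, u t) := by
      rw [← intervalIntegral.integral_of_le hab]
      rw [← intervalIntegral.integral_sub (hint2 a b) (hint a b)]
      rw [← intervalIntegral.integral_const_mul]
    rw [e1]
    rw [intervalIntegral.integral_comp_add_right u h]
    have e2 : (∫ t in (a+h)..(b+h), u t) = (∫ t in (a+h)..b, u t) + ∫ t in b..(b+h), u t :=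
      (intervalIntegral.integral_add_adjacent_intervals (hint _ _) (hint _ _)).symm
    have e3 : (∫ t in a..b, u t) = (∫ t in a..(a+h), u t) + ∫ t in (a+h)..b, u t :=
      (intervalIntegral.integral_add_adjacent_intervals (hint _ _) (hint _ _)).symm
    rw [e2, e3]
    ring
  -- limits of endpoint averages
  have hlim : Tendsto (fun n => ∫ t in Set.Ioc a b, g n t) atTop (𝓝 (u b - u a)) := by
    have := (avg_tendsto hcont b).sub (avg_tendsto hcont a)
    apply this.congr'
    filter_upwards with n
    rw [hgn n]
  have := tendsto_nhds_unique hDCT hlim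
  rw [intervalIntegral.integral_of_le hab]
  exact this

lemma exists_log (c : ℝ) (f f' : ℝ → ℂ) (hf : ∀ t ∈ Set.Ioi c, HasDerivAt f (f' t) t)
    (hf' : ContinuousOn f' (Set.Ioi c)) (h0 : ∀ t ∈ Set.Ioi c, f t ≠ 0) :
    ∃ L : ℝ → ℂ, (∀ t ∈ Set.Ioi c, HasDerivAt L (f' t / f t) t) ∧
      ∀ t ∈ Set.Ioi c, Complex.exp (L t) = f t := by
  set s0 : ℝ := c + 1 with hs0
  have hs0mem : s0 ∈ Set.Ioi c := by simp [hs0]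
  have hfc : ContinuousOn f (Set.Ioi c) := fun t ht => ((hf t ht).continuousAt).continuousWithinAt
  set q : ℝ → ℂ := fun t => f' t / f t with hq
  have hqc : ContinuousOn q (Set.Ioi c) := hf'.div hfc h0
  set L : ℝ → ℂ := fun t => Complex.log (f s0) + ∫ s in s0..t, q s with hL
  have hsub : ∀ t ∈ Set.Ioi c, Set.uIcc s0 t ⊆ Set.Ioi c := by
    intro t ht
    intro x hx
    rcases Set.mem_uIcc.1 hx with ⟨h1, _⟩ | ⟨h1, _⟩
    · exact lt_of_lt_of_le hs0mem h1
    · exact lt_of_lt_of_le ht h1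
  have hLd : ∀ t ∈ Set.Ioi c, HasDerivAt L (q t) t := by
    intro t ht
    have hint : IntervalIntegrable q volume s0 t :=
      (hqc.mono (hsub t ht)).intervalIntegrable
    have hmeas : StronglyMeasurableAtFilter q (𝓝 t) volume :=
      ContinuousOn.stronglyMeasurableAtFilter isOpen_Ioi hqc t ht
    have hca : ContinuousAt q t := hqc.continuousAt (Ioi_mem_nhds ht)
    exact ((intervalIntegral.integral_hasDerivAt_right hint hmeas hca).const_add _)
  have hexp : ∀ t ∈ Set.Ioi c, Complex.exp (L t) = f t := by
    set g : ℝ → ℂ := fun t => f t * Complex.exp (-L t) with hgdef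
    have hgd : ∀ t ∈ Set.Ioi c, HasDerivAt g 0 t := by
      intro t ht
      have h1 : HasDerivAt (fun t => Complex.exp (-L t)) (-q t * Complex.exp (-L t)) t := by
        have := ((hLd t ht).neg).cexp
        simpa [mul_comm] using this
      have := (hf t ht).mul h1
      refine this.congr_deriv ?_
      have hft : f t ≠ 0 := h0 t ht
      have : f t * (-q t * Complex.exp (-L t)) = -(f' t * Complex.exp (-L t)) := by
        rw [hq]
        field_simp
      rw [this]
      ring
    have hgconst : ∀ t ∈ Set.Ioi c, g t = g s0 := by
      intro t ht
      have hconv : Convex ℝ (Set.uIcc s0 t) := convex_uIcc _ _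
      have : ‖g t - g s0‖ ≤ 0 * ‖t - s0‖ := by
        apply hconv.norm_image_sub_le_of_norm_hasDerivWithin_le
          (f' := fun _ => (0:ℂ))
          (fun x hx => ((hgd x (hsub t ht hx)).hasDerivWithinAt))
          (fun x _ => by simp)
          (Set.left_mem_uIcc)
          (Set.right_mem_uIcc)
      rw [zero_mul] at this
      have := norm_le_zero_iff.1 this
      rwa [sub_eq_zero] at this
    intro t ht
    have h1 : g t = 1 := by
      rw [hgconst t ht, hgdef]
      simp only [hL]
      rw [intervalIntegral.integral_same]
      simp only [neg_add, Complex.exp_add, Complex.exp_neg, Complex.exp_log (h0 s0 hs0mem)]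
      simp
      exact div_self (h0 s0 hs0mem)
    have h2 : f t * Complex.exp (-L t) = 1 := h1
    rw [Complex.exp_neg] at h2
    field_simp at h2
    rw [h2]
  exact ⟨L, hLd, hexp⟩

lemma countable_isolated (S : Set ℝ) :
    Set.Countable {x | x ∈ S ∧ x ∉ closure (S \ {x})} := by
  set A := {x | x ∈ S ∧ x ∉ closure (S \ {x})} with hA
  have key : ∀ x ∈ A, ∃ pq : ℚ × ℚ, (pq.1 : ℝ) < x ∧ (x : ℝ) < pq.2 ∧
      ∀ y ∈ S \ {x}, (y : ℝ) ∉ Set.Ioo (pq.1 : ℝ) (pq.2 : ℝ) := by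
    intro x hx
    obtain ⟨hxS, hxc⟩ := hx
    rw [Metric.mem_closure_iff] at hxc
    push_neg at hxc
    obtain ⟨ε, hε, hsep⟩ := hxc
    obtain ⟨p, hp1, hp2⟩ := exists_rat_btwn (show x - ε < x by linarith)
    obtain ⟨q, hq1, hq2⟩ := exists_rat_btwn (show x < x + ε by linarith)
    refine ⟨(p, q), hp2, hq1, fun y hy hmem => ?_⟩
    have := hsep y hy
    rw [Real.dist_eq, ← not_lt] at this
    apply this
    rw [abs_lt]
    obtain ⟨h1, h2⟩ := hmem
    constructor <;> simp only [] at h1 h2 ⊢ <;> [linarith; linarith]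
  choose! pq hpq1 hpq2 hpq3 using key
  have hinj : Set.InjOn pq A := by
    intro x hx y hy hxy
    by_contra hne
    have hyS : y ∈ S \ {x} := ⟨hy.1, by simp [Ne.symm hne]⟩
    apply hpq3 x hx y hyS
    rw [hxy]
    exact ⟨hpq1 y hy, hpq2 y hy⟩
  exact (Set.mapsTo_univ pq A).countable_of_injOn hinj Set.countable_univ

lemma lipschitz_deriv_bound {K : ℝ≥0} {u : ℝ → ℝ} (hu : LipschitzWith K u) (t : ℝ) :
    |deriv u t| ≤ (K : ℝ) := by
  by_cases hd : DifferentiableAt ℝ u t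
  · have h1 := hd.hasDerivAt
    rw [hasDerivAt_iff_tendsto_slope] at h1
    have h2 : Tendsto (fun y => |slope u t y|) (𝓝[≠] t) (𝓝 |deriv u t|) :=
      (continuous_abs.continuousAt).tendsto.comp h1
    apply le_of_tendsto h2
    apply Filter.Eventually.of_forall
    intro y
    rw [slope_def_field]
    rcases eq_or_ne y t with rfl | hne
    · simp
    · rw [abs_div]
      rw [div_le_iff₀ (abs_pos.2 (sub_ne_zero.2 hne))]
      have := hu.dist_le_mul y t
      rw [Real.dist_eq, Real.dist_eq] at this
      exact this
  · rw [deriv_zero_of_not_differentiableAt hd]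
    simp

lemma interval_key (t1 : ℝ) (θ φ θD φD cc : ℝ → ℝ)
    (hθ : ∀ t ∈ Set.Ioi t1, HasDerivAt θ (θD t) t)
    (hφ : ∀ t ∈ Set.Ioi t1, HasDerivAt φ (φD t) t)
    (hθc : ContinuousOn θD (Set.Ioi t1)) (hφc : ContinuousOn φD (Set.Ioi t1))
    (hrel : ∀ t ∈ Set.Ioi t1, ∃ c : ℝ, 0 < c ∧ θD t = c * Real.sin (φ t - θ t))
    (a b : ℝ) (ha : t1 < a) (hab : a ≤ b) :
    ∫ t in a..b, |θD t| ≤ (∫ t in a..b, |φD t|) + π := by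
  classical
  set ψ : ℝ → ℝ := fun t => φ t - θ t with hψdef
  set ψD : ℝ → ℝ := fun t => φD t - θD t with hψDdef
  have hψ : ∀ t ∈ Set.Ioi t1, HasDerivAt ψ (ψD t) t := fun t ht => (hφ t ht).sub (hθ t ht)
  have hψDc : ContinuousOn ψD (Set.Ioi t1) := hφc.sub hθc
  set a' : ℝ := (t1 + a) / 2 with ha'
  have ha'1 : t1 < a' := by rw [ha']; linarith
  have ha'2 : a' < a := by rw [ha']; linarith
  set J : Set ℝ := Set.Icc a' (b + 1) with hJ
  have hJsub : J ⊆ Set.Ioi t1 := fun x hx => lt_of_lt_of_le ha'1 hx.1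
  have hJopen_sub : Set.Ioo a' (b+1) ⊆ J := Set.Ioo_subset_Icc_self
  have hIocJ : Set.Ioc a b ⊆ Set.Ioo a' (b+1) := fun x hx =>
    ⟨lt_of_lt_of_le ha'2 (le_of_lt hx.1), lt_of_le_of_lt hx.2 (by linarith)⟩
  -- Lipschitz bound for ψ on J
  have hJcompact : IsCompact J := isCompact_Icc
  obtain ⟨M, hM⟩ : ∃ M : ℝ, ∀ x ∈ J, ‖ψD x‖ ≤ M :=
    hJcompact.exists_bound_of_continuousOn (hψDc.mono hJsub)
  set K : ℝ≥0 := M.toNNReal with hK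
  have hψlip : LipschitzOnWith K ψ J := by
    apply (convex_Icc _ _).lipschitzOnWith_of_nnnorm_hasDerivWithin_le
      (f' := ψD) (fun x hx => (hψ x (hJsub hx)).hasDerivWithinAt)
    intro x hx
    rw [← NNReal.coe_le_coe]
    calc (‖ψD x‖₊ : ℝ) = ‖ψD x‖ := rfl
      _ ≤ M := hM x hx
      _ ≤ max M 0 := le_max_left _ _
      _ = (K : ℝ) := (Real.coe_toNNReal' M).symm
  obtain ⟨ψE, hψElip, hψEeq⟩ := hψlip.extend_real
  set u : ℝ → ℝ := saw ∘ ψE with hu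
  have hulip : LipschitzWith (1 * K) u := saw_lipschitz.comp hψElip
  have hucont : Continuous u := hulip.continuous
  -- the exceptional countable set
  set Z : ℤ → Set ℝ := fun k => {t ∈ Set.Ioo a' (b+1) | ψ t = k * π} with hZ
  set G : Set ℝ := ⋃ k : ℤ, {x | x ∈ Z k ∧ x ∉ closure (Z k \ {x})} with hG
  have hGcount : Set.Countable G := Set.countable_iUnion (fun k => countable_isolated (Z k))
  have hGnull : (volume : Measure ℝ) G = 0 := hGcount.measure_zero _
  -- a.e. pointwise inequality
  have hae : ∀ᵐ t : ℝ, t ∈ Set.Ioc a b → |θD t| ≤ |φD t| + deriv u t := by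
    have h1 : ∀ᵐ t : ℝ, DifferentiableAt ℝ u t := hulip.ae_differentiableAt_real
    have h2 : ∀ᵐ t : ℝ, t ∉ G := by
      rw [← measure_eq_zero_iff_ae_notMem]
      exact hGnull
    filter_upwards [h1, h2] with t hdiff hG' hmem
    have htIoi : t ∈ Set.Ioi t1 := lt_trans ha'1 (hIocJ hmem).1
    have htIoo : t ∈ Set.Ioo a' (b+1) := hIocJ hmem
    have huev : u =ᶠ[𝓝 t] (saw ∘ ψ) := by
      have : Set.Ioo a' (b+1) ∈ 𝓝 t := (isOpen_Ioo).mem_nhds htIoo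
      filter_upwards [this] with y hy
      simp only [hu, Function.comp_apply]
      rw [← hψEeq (hJopen_sub hy)]
    obtain ⟨c, hcpos, hrelt⟩ := hrel t htIoi
    rcases lt_trichotomy (Real.sin (ψ t)) 0 with hsin | hsin | hsin
    · -- sin ψ t < 0 : θD t < 0, deriv u t = ψD t
      have hder : HasDerivAt u (-Real.sign (Real.sin (ψ t)) * ψD t) t := by
        have hsaw := saw_hasDerivAt (ne_of_lt hsin)
        have := hsaw.comp t (hψ t htIoi)
        exact this.congr_of_eventuallyEq huev
      have hderiv_eq : deriv u t = -Real.sign (Real.sin (ψ t)) * ψD t := hder.deriv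
      rw [Real.sign_of_neg hsin] at hderiv_eq
      have hθDneg : θD t ≤ 0 := by
        rw [hrelt]
        exact mul_nonpos_of_nonneg_of_nonpos hcpos.le hsin.le
      rw [abs_of_nonpos hθDneg, hderiv_eq]
      have : -θD t = ψD t - φD t + (φD t - ψD t) + (-θD t) - (φD t - ψD t) - (ψD t - φD t) := by ring
      have hφDb : φD t ≤ |φD t| := le_abs_self _
      have hψDexp : ψD t = φD t - θD t := rfl
      nlinarith [le_abs_self (φD t), neg_abs_le (φD t)]
    · -- sin ψ t = 0 : θD t = 0, deriv u t = 0
      have hθD0 : θD t = 0 := by rw [hrelt, hsin, mul_zero]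
      rw [hθD0, abs_zero]
      obtain ⟨k, hk⟩ := Real.sin_eq_zero_iff.1 hsin
      have htZ : t ∈ Z k := ⟨htIoo, hk.symm⟩
      have hacc : t ∈ closure (Z k \ {t}) := by
        by_contra hcon
        exact hG' (Set.mem_iUnion.2 ⟨k, htZ, hcon⟩)
      have hderiv0 : deriv u t = 0 := by
        have hd : HasDerivAt u (deriv u t) t := hdiff.hasDerivAt
        rw [hasDerivAt_iff_tendsto_slope] at hd
        have hneBot : (𝓝[Z k \ {t}] t).NeBot := mem_closure_iff_nhdsWithin_neBot.1 hacc
        have hle : 𝓝[Z k \ {t}] t ≤ 𝓝[≠] t := nhdsWithin_mono t (fun y hy => hy.2)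
        have htend : Tendsto (slope u t) (𝓝[Z k \ {t}] t) (𝓝 (deriv u t)) := hd.mono_left hle
        have hconst : ∀ y ∈ Z k \ {t}, slope u t y = 0 := by
          intro y hy
          have hyZ : y ∈ Z k := hy.1
          have huy : u y = saw (k * π) := by
            simp only [hu, Function.comp_apply]
            rw [← hψEeq (hJopen_sub hyZ.1), hyZ.2]
          have hut : u t = saw (k * π) := by
            simp only [hu, Function.comp_apply]
            rw [← hψEeq (hJopen_sub htIoo), htZ.2]
          rw [slope_def_field, huy, hut, sub_self, zero_div]
        have htend0 : Tendsto (slope u t) (𝓝[Z k \ {t}] t) (𝓝 0) := by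
          apply Tendsto.congr' _ tendsto_const_nhds
          filter_upwards [self_mem_nhdsWithin] with y hy
          exact (hconst y hy).symm
        exact (tendsto_nhds_unique htend htend0)
      rw [hderiv0, add_zero]
      exact abs_nonneg _
    · -- sin ψ t > 0 : θD t > 0, deriv u t = -ψD t
      have hder : HasDerivAt u (-Real.sign (Real.sin (ψ t)) * ψD t) t := by
        have hsaw := saw_hasDerivAt (ne_of_gt hsin)
        have := hsaw.comp t (hψ t htIoi)
        exact this.congr_of_eventuallyEq huev
      have hderiv_eq : deriv u t = -Real.sign (Real.sin (ψ t)) * ψD t := hder.deriv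
      rw [Real.sign_of_pos hsin] at hderiv_eq
      have hθDpos : 0 ≤ θD t := by
        rw [hrelt]
        exact mul_nonneg hcpos.le hsin.le
      rw [abs_of_nonneg hθDpos, hderiv_eq]
      have hψDexp : ψD t = φD t - θD t := rfl
      nlinarith [le_abs_self (φD t), neg_abs_le (φD t)]
  -- integrability
  have hIccIoi : Set.Icc a b ⊆ Set.Ioi t1 := fun x hx => lt_of_lt_of_le ha (le_trans hx.1 le_rfl)
  have hθInt : IntegrableOn (fun t => |θD t|) (Set.Ioc a b) volume := by
    apply (ContinuousOn.integrableOn_Icc _).mono_set Set.Ioc_subset_Icc_self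
    exact (hθc.mono hIccIoi).abs
  have hφInt : IntegrableOn (fun t => |φD t|) (Set.Ioc a b) volume := by
    apply (ContinuousOn.integrableOn_Icc _).mono_set Set.Ioc_subset_Icc_self
    exact (hφc.mono hIccIoi).abs
  have hderivMeas : Measurable (deriv u) := measurable_deriv u
  have hderivInt : IntegrableOn (deriv u) (Set.Ioc a b) volume := by
    haveI : IsFiniteMeasure (volume.restrict (Set.Ioc a b)) := by
      constructor; rw [Measure.restrict_apply_univ]; exact measure_Ioc_lt_top
    apply Integrable.mono' (integrable_const ((1 * K : ℝ≥0) : ℝ))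
      hderivMeas.aestronglyMeasurable.restrict
    apply Filter.Eventually.of_forall
    intro t
    rw [Real.norm_eq_abs]
    exact lipschitz_deriv_bound hulip t
  -- integrate the a.e. inequality
  have hmono : ∫ t in Set.Ioc a b, |θD t| ≤ ∫ t in Set.Ioc a b, (|φD t| + deriv u t) := by
    apply MeasureTheory.integral_mono_ae hθInt (hφInt.add hderivInt)
    rw [EventuallyLE, ae_restrict_iff' measurableSet_Ioc]
    exact hae
  have hsplit : ∫ t in Set.Ioc a b, (|φD t| + deriv u t)
      = (∫ t in Set.Ioc a b, |φD t|) + ∫ t in Set.Ioc a b, deriv u t :=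
    MeasureTheory.integral_add hφInt hderivInt
  have hftc : ∫ t in Set.Ioc a b, deriv u t = u b - u a := by
    rw [← intervalIntegral.integral_of_le hab]
    exact lipschitz_ftc hulip a b hab
  have hbound : u b - u a ≤ π := by
    have hbJ : b ∈ J := ⟨by linarith, by linarith⟩
    have haJ : a ∈ J := ⟨by linarith, by linarith⟩
    have hub : u b = saw (ψ b) := by simp only [hu, Function.comp_apply]; rw [← hψEeq hbJ]
    have hua : u a = saw (ψ a) := by simp only [hu, Function.comp_apply]; rw [← hψEeq haJ]
    have h1 := saw_mem (ψ b)
    have h2 := saw_mem (ψ a)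
    rw [hub, hua]
    obtain ⟨h1a, h1b⟩ := h1
    obtain ⟨h2a, h2b⟩ := h2
    linarith
  rw [intervalIntegral.integral_of_le hab, intervalIntegral.integral_of_le hab]
  calc ∫ t in Set.Ioc a b, |θD t| ≤ (∫ t in Set.Ioc a b, |φD t|) + (u b - u a) := by
        rw [← hftc, ← hsplit]; exact hmono
    _ ≤ (∫ t in Set.Ioc a b, |φD t|) + π := by linarith

lemma lintegral_Ioi_iSup (c : ℝ) (g : ℝ → ℝ≥0∞)
    (hg : ∀ n : ℕ, AEMeasurable g (volume.restrict (Set.Ioc (c + 1/((n:ℝ)+1)) (c + 1 + n)))) :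
    ∫⁻ t in Set.Ioi c, g t = ⨆ n : ℕ, ∫⁻ t in Set.Ioc (c + 1/((n:ℝ)+1)) (c + 1 + n), g t := by
  set S : ℕ → Set ℝ := fun n => Set.Ioc (c + 1/((n:ℝ)+1)) (c + 1 + n) with hS
  have hSmono : Monotone S := by
    intro n m hnm
    apply Set.Ioc_subset_Ioc
    · have h1 : ((n:ℝ)+1) ≤ ((m:ℝ)+1) := by
        have := (Nat.cast_le (α := ℝ)).2 hnm; linarith
      have := one_div_le_one_div_of_le (by positivity : (0:ℝ) < (n:ℝ)+1) h1
      linarith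
    · have := (Nat.cast_le (α := ℝ)).2 hnm; linarith
  have hSunion : (⋃ n, S n) = Set.Ioi c := by
    apply Set.Subset.antisymm
    · intro x hx
      obtain ⟨n, hn⟩ := Set.mem_iUnion.1 hx
      have hp : (0:ℝ) < 1/((n:ℝ)+1) := by positivity
      calc c < c + 1/((n:ℝ)+1) := by linarith
        _ < x := hn.1
    · intro x hx
      rw [Set.mem_Ioi] at hx
      obtain ⟨n, hn⟩ := exists_nat_one_div_lt (show (0:ℝ) < x - c by linarith)
      obtain ⟨m, hm⟩ := exists_nat_ge (x - c - 1)
      refine Set.mem_iUnion.2 ⟨max n m, ?_⟩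
      constructor
      · have h1 : (1:ℝ)/((max n m : ℕ):ℝ)+1 ≥ 0 := by positivity
        have h2 : ((n:ℝ)+1) ≤ (((max n m : ℕ):ℝ)+1) := by
          have := (Nat.cast_le (α := ℝ)).2 (le_max_left n m); linarith
        have h3 := one_div_le_one_div_of_le (by positivity : (0:ℝ) < (n:ℝ)+1) h2
        linarith
      · have := (Nat.cast_le (α := ℝ)).2 (le_max_right n m)
        linarith
  have hSmeas : ∀ n, MeasurableSet (S n) := fun n => measurableSet_Ioc
  have hind : ∀ n, AEMeasurable ((S n).indicator g) volume := fun n =>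
    (aemeasurable_indicator_iff (hSmeas n)).2 (hg n)
  have hmono' : ∀ x, Monotone (fun n => (S n).indicator g x) := by
    intro x n m hnm
    simp only []
    by_cases hx : x ∈ S n
    · rw [Set.indicator_of_mem hx, Set.indicator_of_mem (hSmono hnm hx)]
    · rw [Set.indicator_of_notMem hx]
      exact zero_le
  have hsup : ∀ x, (⨆ n, (S n).indicator g x) = (Set.Ioi c).indicator g x := by
    intro x
    by_cases hx : x ∈ Set.Ioi c
    · rw [Set.indicator_of_mem hx]
      obtain ⟨n0, hn0⟩ := Set.mem_iUnion.1 (hSunion ▸ hx)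
      apply le_antisymm
      · apply iSup_le
        intro n
        by_cases h : x ∈ S n
        · rw [Set.indicator_of_mem h]
        · rw [Set.indicator_of_notMem h]; exact zero_le
      · calc g x = (S n0).indicator g x := (Set.indicator_of_mem hn0 g).symm
          _ ≤ ⨆ n, (S n).indicator g x := le_iSup (fun n => (S n).indicator g x) n0
    · rw [Set.indicator_of_notMem hx]
      apply le_antisymm _ zero_le
      apply iSup_le
      intro n
      have : x ∉ S n := fun h => hx (hSunion ▸ Set.mem_iUnion.2 ⟨n, h⟩)
      rw [Set.indicator_of_notMem this]
  calc ∫⁻ t in Set.Ioi c, g t = ∫⁻ t, (Set.Ioi c).indicator g t := by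
        rw [lintegral_indicator measurableSet_Ioi g]
    _ = ∫⁻ t, ⨆ n, (S n).indicator g t := by
        congr 1; ext t; rw [hsup]
    _ = ⨆ n, ∫⁻ t, (S n).indicator g t := by
        rw [lintegral_iSup' hind (Filter.Eventually.of_forall hmono')]
    _ = ⨆ n, ∫⁻ t in S n, g t := by
        congr 1; ext n; rw [lintegral_indicator (hSmeas n) g]

lemma hasDerivAt_im {f : ℝ → ℂ} {z : ℂ} {t : ℝ} (h : HasDerivAt f z t) :
    HasDerivAt (fun s => (f s).im) z.im t := by
  have := (Complex.imCLM.hasFDerivAt (x := f t)).comp_hasDerivAt t h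
  exact this

lemma key_bound (c : ℝ) (σ σ' σ'' : ℝ → ℂ)
    (hd1 : ∀ t ∈ Set.Ioi c, HasDerivAt σ (σ' t) t)
    (hd2 : ∀ t ∈ Set.Ioi c, HasDerivAt σ' (σ'' t) t)
    (hc2 : ContinuousOn σ'' (Set.Ioi c))
    (h'0 : ∀ t ∈ Set.Ioi c, σ' t ≠ 0) (b : ℂ) (hb : ∀ t ∈ Set.Ioi c, σ t ≠ b) :
    ∫⁻ t in Set.Ioi c, ENNReal.ofReal |(σ' t / (σ t - b)).im| ≤
      (∫⁻ t in Set.Ioi c, ENNReal.ofReal |(σ'' t / σ' t).im|) + ENNReal.ofReal π := by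
  have hc1 : ContinuousOn σ' (Set.Ioi c) := fun t ht =>
    ((hd2 t ht).continuousAt).continuousWithinAt
  have hc0 : ContinuousOn σ (Set.Ioi c) := fun t ht =>
    ((hd1 t ht).continuousAt).continuousWithinAt
  -- logs
  obtain ⟨L2, hL2d, hL2e⟩ := exists_log c (fun t => σ t - b) σ'
    (fun t ht => (hd1 t ht).sub_const b) hc1 (fun t ht => sub_ne_zero.2 (hb t ht))
  obtain ⟨L1, hL1d, hL1e⟩ := exists_log c σ' σ'' hd2 hc2 h'0
  set θ : ℝ → ℝ := fun t => (L2 t).im with hθdef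
  set φ : ℝ → ℝ := fun t => (L1 t).im with hφdef
  set θD : ℝ → ℝ := fun t => (σ' t / (σ t - b)).im with hθDdef
  set φD : ℝ → ℝ := fun t => (σ'' t / σ' t).im with hφDdef
  have hθ : ∀ t ∈ Set.Ioi c, HasDerivAt θ (θD t) t := fun t ht => hasDerivAt_im (hL2d t ht)
  have hφ : ∀ t ∈ Set.Ioi c, HasDerivAt φ (φD t) t := fun t ht => hasDerivAt_im (hL1d t ht)
  have hθc : ContinuousOn θD (Set.Ioi c) :=
    Complex.continuous_im.comp_continuousOn (hc1.div (hc0.sub continuousOn_const)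
      (fun t ht => sub_ne_zero.2 (hb t ht)))
  have hφc : ContinuousOn φD (Set.Ioi c) :=
    Complex.continuous_im.comp_continuousOn (hc2.div hc1 h'0)
  have hrel : ∀ t ∈ Set.Ioi c, ∃ cc : ℝ, 0 < cc ∧ θD t = cc * Real.sin (φ t - θ t) := by
    intro t ht
    refine ⟨Real.exp ((L1 t - L2 t).re), Real.exp_pos _, ?_⟩
    have hexp : Complex.exp (L1 t - L2 t) = σ' t / (σ t - b) := by
      rw [Complex.exp_sub, hL1e t ht, hL2e t ht]
    have him := congrArg Complex.im hexp
    rw [Complex.exp_im] at him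
    rw [hθDdef]
    simp only []
    rw [← him, Complex.sub_im]
  -- apply interval_key on each compact piece
  have hinterval : ∀ n : ℕ,
      ∫ t in (c + 1/((n:ℝ)+1))..(c + 1 + n), |θD t|
        ≤ (∫ t in (c + 1/((n:ℝ)+1))..(c + 1 + n), |φD t|) + π := by
    intro n
    apply interval_key c θ φ θD φD (fun _ => 1) hθ hφ hθc hφc hrel
    · have : (0:ℝ) < 1/((n:ℝ)+1) := by positivity
      linarith
    · have : (0:ℝ) ≤ 1/((n:ℝ)+1) := by positivity
      have h1 : (1:ℝ)/((n:ℝ)+1) ≤ 1 := by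
        rw [div_le_one (by positivity)]
        linarith [Nat.cast_nonneg (α := ℝ) n]
      have h2 : (0:ℝ) ≤ (n:ℝ) := Nat.cast_nonneg n
      linarith
  -- measurability of integrands on pieces
  have hmeasθ : ∀ n : ℕ, AEMeasurable (fun t => ENNReal.ofReal |θD t|)
      (volume.restrict (Set.Ioc (c + 1/((n:ℝ)+1)) (c + 1 + n))) := by
    intro n
    have hsub : Set.Ioc (c + 1/((n:ℝ)+1)) (c + 1 + n) ⊆ Set.Ioi c := by
      intro x hx
      have : (0:ℝ) < 1/((n:ℝ)+1) := by positivity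
      exact lt_trans (by linarith) hx.1
    apply ENNReal.measurable_ofReal.comp_aemeasurable
    exact (hθc.mono hsub).abs.aemeasurable measurableSet_Ioc
  have hmeasφ : ∀ n : ℕ, AEMeasurable (fun t => ENNReal.ofReal |φD t|)
      (volume.restrict (Set.Ioc (c + 1/((n:ℝ)+1)) (c + 1 + n))) := by
    intro n
    have hsub : Set.Ioc (c + 1/((n:ℝ)+1)) (c + 1 + n) ⊆ Set.Ioi c := by
      intro x hx
      have : (0:ℝ) < 1/((n:ℝ)+1) := by positivity
      exact lt_trans (by linarith) hx.1
    apply ENNReal.measurable_ofReal.comp_aemeasurable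
    exact (hφc.mono hsub).abs.aemeasurable measurableSet_Ioc
  -- convert and take sup
  rw [lintegral_Ioi_iSup c _ hmeasθ]
  apply iSup_le
  intro n
  set an : ℝ := c + 1/((n:ℝ)+1) with han
  set bn : ℝ := c + 1 + n with hbn
  have hanb : an ≤ bn := by
    rw [han, hbn]
    have h1 : (1:ℝ)/((n:ℝ)+1) ≤ 1 := by
      rw [div_le_one (by positivity)]
      linarith [Nat.cast_nonneg (α := ℝ) n]
    have h2 : (0:ℝ) ≤ (n:ℝ) := Nat.cast_nonneg n
    linarith
  have hsub : Set.Ioc an bn ⊆ Set.Ioi c := by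
    intro x hx
    have : (0:ℝ) < 1/((n:ℝ)+1) := by positivity
    exact lt_trans (by rw [han] at hx ⊢; linarith [hx.1]) hx.1
  have hsubIcc : Set.Icc an bn ⊆ Set.Ioi c := by
    intro x hx
    have h0 : (0:ℝ) < 1/((n:ℝ)+1) := by positivity
    have := hx.1
    rw [han] at this
    simp only [Set.mem_Ioi]
    linarith
  have hθint : IntegrableOn (fun t => |θD t|) (Set.Ioc an bn) volume :=
    ((hθc.mono hsubIcc).abs.integrableOn_Icc).mono_set Set.Ioc_subset_Icc_self
  have hφint : IntegrableOn (fun t => |φD t|) (Set.Ioc an bn) volume :=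
    ((hφc.mono hsubIcc).abs.integrableOn_Icc).mono_set Set.Ioc_subset_Icc_self
  have e1 : ∫⁻ t in Set.Ioc an bn, ENNReal.ofReal |θD t|
      = ENNReal.ofReal (∫ t in Set.Ioc an bn, |θD t|) := by
    rw [← MeasureTheory.ofReal_integral_eq_lintegral_ofReal hθint
      (Filter.Eventually.of_forall (fun t => abs_nonneg _))]
  have e2 : ENNReal.ofReal (∫ t in Set.Ioc an bn, |φD t|)
      = ∫⁻ t in Set.Ioc an bn, ENNReal.ofReal |φD t| :=
    MeasureTheory.ofReal_integral_eq_lintegral_ofReal hφint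
      (Filter.Eventually.of_forall (fun t => abs_nonneg _))
  rw [e1]
  calc ENNReal.ofReal (∫ t in Set.Ioc an bn, |θD t|)
      ≤ ENNReal.ofReal ((∫ t in Set.Ioc an bn, |φD t|) + π) := by
        apply ENNReal.ofReal_le_ofReal
        have := hinterval n
        rw [intervalIntegral.integral_of_le hanb, intervalIntegral.integral_of_le hanb] at this
        exact this
    _ = ENNReal.ofReal (∫ t in Set.Ioc an bn, |φD t|) + ENNReal.ofReal π := by
        rw [ENNReal.ofReal_add (integral_nonneg (fun t => abs_nonneg _)) Real.pi_pos.le]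
    _ ≤ (∫⁻ t in Set.Ioi c, ENNReal.ofReal |φD t|) + ENNReal.ofReal π := by
        apply add_le_add_left
        rw [e2]
        exact lintegral_mono_set hsub

lemma variation_mono (f : ℝ → ℂ) (aa : ℂ) {s t : ℝ} (hst : s ≤ t) :
    variation f t aa ≤ variation f s aa := by
  unfold variation
  apply mul_le_mul_right
  exact lintegral_mono_set (Set.Ioi_subset_Ioi hst)

lemma ofReal_half_pi : ENNReal.ofReal (1 / (2 * Real.pi)) * ENNReal.ofReal π
    = ENNReal.ofReal (1/2) := by
  rw [← ENNReal.ofReal_mul (by positivity)]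
  congr 1
  field_simp

lemma variation_key (c : ℝ) (σ : ℝ → ℂ)
    (hd1 : ∀ t ∈ Set.Ioi c, HasDerivAt σ (deriv σ t) t)
    (hd2 : ∀ t ∈ Set.Ioi c, HasDerivAt (deriv σ) (deriv (deriv σ) t) t)
    (hc2 : ContinuousOn (deriv (deriv σ)) (Set.Ioi c))
    (h'0 : ∀ t ∈ Set.Ioi c, deriv σ t ≠ 0) (b : ℂ) (hb : ∀ t ∈ Set.Ioi c, σ t ≠ b) :
    variation σ c b ≤ variation (deriv σ) c 0 + ENNReal.ofReal (1/2) := by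
  have hkey := key_bound c σ (deriv σ) (deriv (deriv σ)) hd1 hd2 hc2 h'0 b hb
  unfold variation
  calc ENNReal.ofReal (1 / (2 * Real.pi)) *
        ∫⁻ t in Set.Ioi c, ENNReal.ofReal |(deriv σ t / (σ t - b)).im|
      ≤ ENNReal.ofReal (1 / (2 * Real.pi)) *
        ((∫⁻ t in Set.Ioi c, ENNReal.ofReal |(deriv (deriv σ) t / (deriv σ t)).im|)
          + ENNReal.ofReal π) := mul_le_mul_right hkey _
    _ = ENNReal.ofReal (1 / (2 * Real.pi)) *
        (∫⁻ t in Set.Ioi c, ENNReal.ofReal |(deriv (deriv σ) t / (deriv σ t - 0)).im|)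
          + ENNReal.ofReal (1/2) := by
        rw [mul_add, ofReal_half_pi]
        congr 2
        apply lintegral_congr
        intro t
        rw [sub_zero]

/-- **Variation Numbers and Pullbacks.**
Let `γ₀` be an admissible curve on `(t₀, ∞)` with `α(γ₀', 0) ≤ 1/2`. For every `n` choose
`a_n` outside the closure of the image of `γ_n` and a continuous `γ_{n+1}` with
`exp(γ_{n+1}(t)) = γ_n(t) - a_n`. Then for every `n`, every `t₁ > t₀` and every `b`
outside the closure of `γ_n((t₁, ∞))`, one has `α(γ_n|_{(t₁,∞)}, b) ≤ 2^n` and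
`α(γ_n'|_{(t₁,∞)}, 0) ≤ 2^n - 1/2`. -/
theorem variation_numbers_pullbacks (t0 : ℝ) (γ : ℕ → ℝ → ℂ) (a : ℕ → ℂ)
    (h0 : Admissible t0 (γ 0))
    (hα : variation (deriv (γ 0)) t0 0 ≤ ENNReal.ofReal (1 / 2))
    (ha : ∀ n : ℕ, a n ∉ closure (γ n '' Set.Ioi t0))
    (hcont : ∀ n : ℕ, ContinuousOn (γ (n + 1)) (Set.Ioi t0))
    (hexp : ∀ n : ℕ, ∀ t ∈ Set.Ioi t0, Complex.exp (γ (n + 1) t) = γ n t - a n) :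
    ∀ n : ℕ, ∀ t1 : ℝ, t0 < t1 → ∀ b : ℂ, b ∉ closure (γ n '' Set.Ioi t1) →
      variation (γ n) t1 b ≤ ENNReal.ofReal ((2 : ℝ) ^ n) ∧
      variation (deriv (γ n)) t1 0 ≤ ENNReal.ofReal ((2 : ℝ) ^ n - 1 / 2) := by
  classical
  set Nice : ℕ → Prop := fun n =>
    (∀ t ∈ Set.Ioi t0, HasDerivAt (γ n) (deriv (γ n) t) t) ∧
    (∀ t ∈ Set.Ioi t0, HasDerivAt (deriv (γ n)) (deriv (deriv (γ n)) t) t) ∧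
    ContinuousOn (deriv (deriv (γ n))) (Set.Ioi t0) ∧
    (∀ t ∈ Set.Ioi t0, deriv (γ n) t ≠ 0) with hNicedef
  have hne : ∀ n : ℕ, ∀ t ∈ Set.Ioi t0, γ n t - a n ≠ 0 := by
    intro n t ht
    rw [sub_ne_zero]
    intro heq
    exact ha n (subset_closure ⟨t, ht, heq⟩)
  -- base case of Nice
  have hNice0 : Nice 0 := by
    obtain ⟨-, hcd, hnz, -⟩ := h0
    have hd1 : ∀ t ∈ Set.Ioi t0, HasDerivAt (γ 0) (deriv (γ 0) t) t := by
      intro t ht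
      exact ((hcd.differentiableOn (by norm_num)).differentiableAt
        (Ioi_mem_nhds ht)).hasDerivAt
    have hC1 : ContDiffOn ℝ 1 (deriv (γ 0)) (Set.Ioi t0) :=
      hcd.deriv_of_isOpen isOpen_Ioi (by norm_num)
    have hd2 : ∀ t ∈ Set.Ioi t0, HasDerivAt (deriv (γ 0)) (deriv (deriv (γ 0)) t) t := by
      intro t ht
      exact ((hC1.differentiableOn (by norm_num)).differentiableAt (Ioi_mem_nhds ht)).hasDerivAt
    have hc2 : ContinuousOn (deriv (deriv (γ 0))) (Set.Ioi t0) :=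
      hC1.continuousOn_deriv_of_isOpen isOpen_Ioi le_rfl
    exact ⟨hd1, hd2, hc2, hnz⟩
  -- inductive step of Nice, with the pointwise bound
  have hstep : ∀ n : ℕ, Nice n → Nice (n + 1) ∧
      (∀ t ∈ Set.Ioi t0,
        |(deriv (deriv (γ (n+1))) t / (deriv (γ (n+1)) t - 0)).im| ≤
          |(deriv (deriv (γ n)) t / (deriv (γ n) t - 0)).im| +
          |(deriv (γ n) t / (γ n t - a n)).im|) := by
    intro n hN
    obtain ⟨hd1, hd2, hc2, hnz⟩ := hN
    have hc1 : ContinuousOn (deriv (γ n)) (Set.Ioi t0) := fun t ht =>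
      ((hd2 t ht).continuousAt).continuousWithinAt
    have hc0 : ContinuousOn (γ n) (Set.Ioi t0) := fun t ht =>
      ((hd1 t ht).continuousAt).continuousWithinAt
    obtain ⟨L, hLd, hLe⟩ := exists_log t0 (fun t => γ n t - a n) (deriv (γ n))
      (fun t ht => (hd1 t ht).sub_const (a n)) hc1 (hne n)
    set q : ℝ → ℂ := fun t => deriv (γ n) t / (γ n t - a n) with hq
    -- γ (n+1) = L + constant * I on Ioi t0
    have hLcont : ContinuousOn L (Set.Ioi t0) := fun t ht =>
      ((hLd t ht).continuousAt).continuousWithinAt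
    set D : ℝ → ℂ := fun t => γ (n+1) t - L t with hD
    have hDexp : ∀ t ∈ Set.Ioi t0, Complex.exp (D t) = 1 := by
      intro t ht
      show Complex.exp (γ (n+1) t - L t) = 1
      rw [Complex.exp_sub, hexp n t ht, hLe t ht, div_self (hne n t ht)]
    have hDk : ∀ t ∈ Set.Ioi t0, ∃ k : ℤ, D t = k * (2 * π * Complex.I) := by
      intro t ht
      exact Complex.exp_eq_one_iff.1 (hDexp t ht)
    have hDcont : ContinuousOn D (Set.Ioi t0) := (hcont n).sub hLcont
    -- D is constant on Ioi t0
    have hDconst : ∀ t ∈ Set.Ioi t0, D t = D (t0 + 1) := by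
      have ht01 : t0 + 1 ∈ Set.Ioi t0 := by simp
      intro t ht
      -- consider the continuous real function κ = (D ·).im on the preconnected Ioi t0
      set κ : ℝ → ℝ := fun s => (D s).im with hκ
      have hκcont : ContinuousOn κ (Set.Ioi t0) :=
        Complex.continuous_im.comp_continuousOn hDcont
      have hκval : ∀ s ∈ Set.Ioi t0, ∃ k : ℤ, κ s = 2 * π * k := by
        intro s hs
        obtain ⟨k, hk⟩ := hDk s hs
        refine ⟨k, ?_⟩
        show (D s).im = 2 * π * k
        rw [hk]
        simp [Complex.mul_im, Complex.I_im, Complex.I_re]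
        ring
      have hκeq : κ t = κ (t0 + 1) := by
        by_contra hneq
        have hpre : IsPreconnected (κ '' Set.Ioi t0) :=
          (isPreconnected_Ioi).image κ hκcont
        have hord : (κ '' Set.Ioi t0).OrdConnected := hpre.ordConnected
        obtain ⟨kt, hkt⟩ := hκval t ht
        obtain ⟨ks, hks⟩ := hκval (t0+1) ht01
        -- the two values differ; between them there is an odd multiple of π in the image
        have hmemt : κ t ∈ κ '' Set.Ioi t0 := ⟨t, ht, rfl⟩
        have hmems : κ (t0+1) ∈ κ '' Set.Ioi t0 := ⟨t0+1, ht01, rfl⟩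
        have hππ : (0:ℝ) < π := Real.pi_pos
        rcases lt_or_gt_of_ne hneq with hlt | hlt
        · have hks_kt : (kt:ℝ) < ks := by
            have := hlt; rw [hkt, hks] at this; nlinarith
          have hge : κ t + 2 * π ≤ κ (t0+1) := by
            rw [hkt, hks]
            have : (kt:ℝ) + 1 ≤ ks := by
              have h2 : kt < ks := by exact_mod_cast hks_kt
              have := Int.add_one_le_iff.2 h2
              exact_mod_cast this
            nlinarith
          have hmid : κ t + π ∈ Set.Icc (κ t) (κ (t0+1)) := ⟨by linarith, by linarith⟩
          obtain ⟨r, hr, hrval⟩ := hord.out hmemt hmems hmid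
          obtain ⟨kr, hkr⟩ := hκval r hr
          rw [hkr, hkt] at hrval
          have hmul : π * (2 * (kr:ℝ)) = π * (2 * (kt:ℝ) + 1) := by linear_combination hrval
          have hcst : (2 * (kr:ℝ)) = 2 * (kt:ℝ) + 1 := mul_left_cancel₀ Real.pi_ne_zero hmul
          have : (2 * kr : ℤ) = 2 * kt + 1 := by exact_mod_cast hcst
          omega
        · have hks_kt : (ks:ℝ) < kt := by
            have := hlt; rw [hkt, hks] at this; nlinarith
          have hge : κ (t0+1) + 2 * π ≤ κ t := by
            rw [hkt, hks]
            have : (ks:ℝ) + 1 ≤ kt := by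
              have h2 : ks < kt := by exact_mod_cast hks_kt
              have := Int.add_one_le_iff.2 h2
              exact_mod_cast this
            nlinarith
          have hmid : κ (t0+1) + π ∈ Set.Icc (κ (t0+1)) (κ t) := ⟨by linarith, by linarith⟩
          obtain ⟨r, hr, hrval⟩ := hord.out hmems hmemt hmid
          obtain ⟨kr, hkr⟩ := hκval r hr
          rw [hkr, hks] at hrval
          have hmul : π * (2 * (kr:ℝ)) = π * (2 * (ks:ℝ) + 1) := by linear_combination hrval
          have hcst : (2 * (kr:ℝ)) = 2 * (ks:ℝ) + 1 := mul_left_cancel₀ Real.pi_ne_zero hmul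
          have : (2 * kr : ℤ) = 2 * ks + 1 := by exact_mod_cast hcst
          omega
      -- D is purely imaginary with imaginary part κ
      obtain ⟨kt, hkt⟩ := hDk t ht
      obtain ⟨ks, hks⟩ := hDk (t0+1) ht01
      have hre : ∀ (k : ℤ), ((k : ℂ) * (2 * π * Complex.I)).re = 0 := by
        intro k
        simp [Complex.mul_re, Complex.I_re, Complex.I_im]
      have him : ∀ (k : ℤ), ((k : ℂ) * (2 * π * Complex.I)).im = 2 * π * k := by
        intro k
        simp [Complex.mul_im, Complex.I_re, Complex.I_im]
        ring
      apply Complex.ext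
      · rw [hkt, hks, hre, hre]
      · have h1 : (D t).im = κ t := rfl
        have h2 : (D (t0+1)).im = κ (t0+1) := rfl
        rw [h1, h2, hκeq]
    -- derivative identity for γ (n+1)
    have hd1' : ∀ t ∈ Set.Ioi t0, HasDerivAt (γ (n+1)) (q t) t := by
      intro t ht
      have hev : γ (n+1) =ᶠ[𝓝 t] (fun s => L s + D (t0+1)) := by
        filter_upwards [isOpen_Ioi.mem_nhds ht] with s hs
        have := hDconst s hs
        rw [hD] at this
        simp only [] at this
        linear_combination this
      have : HasDerivAt (fun s => L s + D (t0+1)) (q t) t := (hLd t ht).add_const _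
      exact this.congr_of_eventuallyEq hev
    have hderiv_eq : ∀ t ∈ Set.Ioi t0, deriv (γ (n+1)) t = q t := fun t ht =>
      (hd1' t ht).deriv
    -- second derivative
    set Q : ℝ → ℂ := fun t => (deriv (deriv (γ n)) t * (γ n t - a n) -
      deriv (γ n) t * deriv (γ n) t) / (γ n t - a n) ^ 2 with hQ
    have hqd : ∀ t ∈ Set.Ioi t0, HasDerivAt q (Q t) t := by
      intro t ht
      exact (hd2 t ht).div ((hd1 t ht).sub_const (a n)) (hne n t ht)
    have hd2' : ∀ t ∈ Set.Ioi t0, HasDerivAt (deriv (γ (n+1))) (Q t) t := by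
      intro t ht
      have hev : deriv (γ (n+1)) =ᶠ[𝓝 t] q := by
        filter_upwards [isOpen_Ioi.mem_nhds ht] with s hs
        exact hderiv_eq s hs
      exact (hqd t ht).congr_of_eventuallyEq hev
    have hdd_eq : ∀ t ∈ Set.Ioi t0, deriv (deriv (γ (n+1))) t = Q t := fun t ht =>
      (hd2' t ht).deriv
    have hQc : ContinuousOn Q (Set.Ioi t0) := by
      apply ContinuousOn.div
      · exact (hc2.mul ((hc0.sub continuousOn_const))).sub (hc1.mul hc1)
      · exact ((hc0.sub continuousOn_const).pow 2)
      · intro t ht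
        exact pow_ne_zero 2 (hne n t ht)
    have hNice1 : Nice (n+1) := by
      refine ⟨fun t ht => ?_, fun t ht => ?_, ?_, fun t ht => ?_⟩
      · have := hd1' t ht
        rwa [← hderiv_eq t ht] at this
      · have := hd2' t ht
        rwa [← hdd_eq t ht] at this
      · exact ContinuousOn.congr hQc hdd_eq
      · rw [hderiv_eq t ht]
        exact div_ne_zero (hnz t ht) (hne n t ht)
    refine ⟨hNice1, fun t ht => ?_⟩
    rw [hderiv_eq t ht, hdd_eq t ht, sub_zero, sub_zero]
    have halg : Q t / q t = deriv (deriv (γ n)) t / deriv (γ n) t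
        - deriv (γ n) t / (γ n t - a n) := by
      have hB : deriv (γ n) t ≠ 0 := hnz t ht
      have hC : γ n t - a n ≠ 0 := hne n t ht
      show (deriv (deriv (γ n)) t * (γ n t - a n) - deriv (γ n) t * deriv (γ n) t) /
          (γ n t - a n) ^ 2 / (deriv (γ n) t / (γ n t - a n))
        = deriv (deriv (γ n)) t / deriv (γ n) t - deriv (γ n) t / (γ n t - a n)
      generalize hCz : γ n t - a n = Cz at hC ⊢
      field_simp
    rw [halg, Complex.sub_im]
    exact abs_sub _ _
  have hNice : ∀ n, Nice n := by
    intro n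
    induction n with
    | zero => exact hNice0
    | succ m ihm => exact (hstep m ihm).1
  have hA : ∀ n : ℕ, ∀ t1 : ℝ, t0 < t1 → ∀ b : ℂ, b ∉ closure (γ n '' Set.Ioi t1) →
      variation (γ n) t1 b ≤ variation (deriv (γ n)) t1 0 + ENNReal.ofReal (1/2) := by
    intro n t1 ht1 b hb
    obtain ⟨h1, h2, h3, h4⟩ := hNice n
    have hsub : Set.Ioi t1 ⊆ Set.Ioi t0 := Set.Ioi_subset_Ioi ht1.le
    apply variation_key t1 (γ n) (fun t ht => h1 t (hsub ht)) (fun t ht => h2 t (hsub ht))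
      (h3.mono hsub) (fun t ht => h4 t (hsub ht)) b
    intro t ht heq
    exact hb (subset_closure ⟨t, ht, heq⟩)
  have hB : ∀ n : ℕ, ∀ t1 : ℝ, t0 < t1 →
      variation (deriv (γ (n+1))) t1 0 ≤
        variation (deriv (γ n)) t1 0 + variation (γ n) t1 (a n) := by
    intro n t1 ht1
    have hsub : Set.Ioi t1 ⊆ Set.Ioi t0 := Set.Ioi_subset_Ioi ht1.le
    obtain ⟨h1, h2, h3, h4⟩ := hNice n
    have hbd := (hstep n (hNice n)).2
    have hc1 : ContinuousOn (deriv (γ n)) (Set.Ioi t0) := fun t ht =>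
      ((h2 t ht).continuousAt).continuousWithinAt
    set g : ℝ → ℝ≥0∞ := fun t =>
      ENNReal.ofReal |(deriv (deriv (γ n)) t / (deriv (γ n) t - 0)).im| with hgdef
    set h : ℝ → ℝ≥0∞ := fun t =>
      ENNReal.ofReal |(deriv (γ n) t / (γ n t - a n)).im| with hhdef
    have hgmeas : AEMeasurable g (volume.restrict (Set.Ioi t1)) := by
      apply ENNReal.measurable_ofReal.comp_aemeasurable
      apply ContinuousOn.aemeasurable _ measurableSet_Ioi
      apply ContinuousOn.abs
      apply Complex.continuous_im.comp_continuousOn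
      apply ContinuousOn.div (h3.mono hsub) ((hc1.mono hsub).sub continuousOn_const)
      intro t ht
      simpa using h4 t (hsub ht)
    have hmono : (∫⁻ t in Set.Ioi t1,
        ENNReal.ofReal |(deriv (deriv (γ (n+1))) t / (deriv (γ (n+1)) t - 0)).im|)
        ≤ ∫⁻ t in Set.Ioi t1, (g t + h t) := by
      apply lintegral_mono_ae
      rw [ae_restrict_iff' measurableSet_Ioi]
      apply Filter.Eventually.of_forall
      intro t ht
      calc ENNReal.ofReal |(deriv (deriv (γ (n+1))) t / (deriv (γ (n+1)) t - 0)).im|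
          ≤ ENNReal.ofReal (|(deriv (deriv (γ n)) t / (deriv (γ n) t - 0)).im| +
              |(deriv (γ n) t / (γ n t - a n)).im|) :=
            ENNReal.ofReal_le_ofReal (hbd t (hsub ht))
        _ = g t + h t := ENNReal.ofReal_add (abs_nonneg _) (abs_nonneg _)
    have hadd : (∫⁻ t in Set.Ioi t1, (g t + h t))
        = (∫⁻ t in Set.Ioi t1, g t) + ∫⁻ t in Set.Ioi t1, h t :=
      lintegral_add_left' hgmeas h
    unfold variation
    rw [← mul_add]
    apply mul_le_mul_right
    calc (∫⁻ t in Set.Ioi t1,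
          ENNReal.ofReal |(deriv (deriv (γ (n+1))) t / (deriv (γ (n+1)) t - 0)).im|)
        ≤ ∫⁻ t in Set.Ioi t1, (g t + h t) := hmono
      _ = (∫⁻ t in Set.Ioi t1, g t) + ∫⁻ t in Set.Ioi t1, h t := hadd
  intro n
  induction n with
  | zero =>
    intro t1 ht1 b hb
    have hBbound : variation (deriv (γ 0)) t1 0 ≤ ENNReal.ofReal (1/2) :=
      le_trans (variation_mono _ _ ht1.le) hα
    constructor
    · calc variation (γ 0) t1 b
          ≤ variation (deriv (γ 0)) t1 0 + ENNReal.ofReal (1/2) := hA 0 t1 ht1 b hb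
        _ ≤ ENNReal.ofReal (1/2) + ENNReal.ofReal (1/2) := add_le_add_left hBbound _
        _ = ENNReal.ofReal ((2:ℝ)^0) := by
            rw [← ENNReal.ofReal_add (by norm_num) (by norm_num)]
            norm_num
    · calc variation (deriv (γ 0)) t1 0 ≤ ENNReal.ofReal (1/2) := hBbound
        _ = ENNReal.ofReal ((2:ℝ)^0 - 1/2) := by norm_num
  | succ m ihm =>
    intro t1 ht1 b hb
    have h2m : (1:ℝ) ≤ 2^m := one_le_pow₀ (by norm_num)
    have haIn : a m ∉ closure (γ m '' Set.Ioi t1) := by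
      intro hmem
      exact ha m (closure_mono (Set.image_mono (Set.Ioi_subset_Ioi ht1.le)) hmem)
    obtain ⟨ihA, ihB⟩ := ihm t1 ht1 (a m) haIn
    have hBbound : variation (deriv (γ (m+1))) t1 0 ≤ ENNReal.ofReal ((2:ℝ)^(m+1) - 1/2) := by
      calc variation (deriv (γ (m+1))) t1 0
          ≤ variation (deriv (γ m)) t1 0 + variation (γ m) t1 (a m) := hB m t1 ht1
        _ ≤ ENNReal.ofReal ((2:ℝ)^m - 1/2) + ENNReal.ofReal ((2:ℝ)^m) := add_le_add ihB ihA
        _ = ENNReal.ofReal ((2:ℝ)^(m+1) - 1/2) := by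
            rw [← ENNReal.ofReal_add (by linarith) (by positivity)]
            congr 1
            ring
    constructor
    · calc variation (γ (m+1)) t1 b
          ≤ variation (deriv (γ (m+1))) t1 0 + ENNReal.ofReal (1/2) := hA (m+1) t1 ht1 b hb
        _ ≤ ENNReal.ofReal ((2:ℝ)^(m+1) - 1/2) + ENNReal.ofReal (1/2) :=
            add_le_add_left hBbound _
        _ = ENNReal.ofReal ((2:ℝ)^(m+1)) := by
            rw [← ENNReal.ofReal_add (by rw [pow_succ]; nlinarith [h2m]) (by norm_num)]
            congr 1
            ring
    · exact hBbound
end
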